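/- arXiv:1805.06108 — 8 statements merged into one kernel-verified Lean document; each statement's English description precedes it below -/
import Mathlib

section
/- For all nonnegative integers N and M, the polynomial identity (∑_{n=0}^{MN} p_n(N,M) q^n) · ∏_{j=1}^{N} (1 − q^j) = ∏_{j=M+1}^{N+M} (1 − q^j) holds in the polynomial ring ℤ[q]. -/
/-- The number of partitions of `n` into at most `M` parts, each of size at most `N`. -/
def restrictedCount (n N M : ℕ) : ℕ :=
  Fintype.card {p : n.Partition // p.parts.card ≤ M ∧ ∀ i ∈ p.parts, i ≤ N}

open Polynomial Multiset

lemma restrictedCount_zero (N M : ℕ) : restrictedCount 0 N M = 1 := by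
  unfold restrictedCount
  rw [Fintype.card_eq_one_iff]
  refine ⟨⟨default, by simp⟩, ?_⟩
  rintro ⟨p, hp⟩
  ext1
  exact Subsingleton.elim _ _

lemma restrictedCount_eq_zero {n N M : ℕ} (h : M * N < n) : restrictedCount n N M = 0 := by
  unfold restrictedCount
  rw [Fintype.card_eq_zero_iff]
  constructor
  rintro ⟨p, hc, hb⟩
  have h1 : p.parts.sum ≤ p.parts.card • N := Multiset.sum_le_card_nsmul _ _ hb
  rw [smul_eq_mul] at h1
  have h2 : p.parts.card * N ≤ M * N := Nat.mul_le_mul_right _ hc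
  have h3 := p.parts_sum
  omega

/-- The bijection: partitions of `n` (in an `(N+1) × (M+1)` box) containing a part `N+1`
correspond to partitions of `n - (N+1)` in an `(N+1) × M` box. -/
def eraseEquiv (n N M : ℕ) (hn : N + 1 ≤ n) :
    {p : n.Partition // (N + 1) ∈ p.parts ∧ p.parts.card ≤ M + 1 ∧ ∀ i ∈ p.parts, i ≤ N + 1} ≃
    {p : (n - (N + 1)).Partition // p.parts.card ≤ M ∧ ∀ i ∈ p.parts, i ≤ N + 1} where
  toFun p := ⟨⟨p.1.parts.erase (N + 1),
      fun hi => p.1.parts_pos (Multiset.mem_of_mem_erase hi),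
      by
        have h := Multiset.cons_erase p.2.1
        have h2 : ((N + 1) ::ₘ p.1.parts.erase (N + 1)).sum = n := by
          rw [h, p.1.parts_sum]
        rw [Multiset.sum_cons] at h2
        omega⟩,
    by
      refine ⟨?_, fun i hi => p.2.2.2 i (Multiset.mem_of_mem_erase hi)⟩
      show Multiset.card (p.1.parts.erase (N + 1)) ≤ M
      have h := Multiset.cons_erase p.2.1
      have h2 : Multiset.card p.1.parts = Multiset.card (p.1.parts.erase (N + 1)) + 1 := by
        conv_lhs => rw [← h]
        rw [Multiset.card_cons]
      have := p.2.2.1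
      omega⟩
  invFun q := ⟨⟨(N + 1) ::ₘ q.1.parts,
      fun hi => by
        rcases Multiset.mem_cons.mp hi with h | h
        · omega
        · exact q.1.parts_pos h,
      by rw [Multiset.sum_cons, q.1.parts_sum]; omega⟩,
    by
      refine ⟨Multiset.mem_cons_self _ _, ?_, ?_⟩
      · rw [Multiset.card_cons]
        have := q.2.1
        omega
      · intro i hi
        rcases Multiset.mem_cons.mp hi with h | h
        · omega
        · exact q.2.2 i h⟩
  left_inv p := by
    ext1
    ext1
    exact Multiset.cons_erase p.2.1
  right_inv q := by
    ext1
    ext1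
    exact Multiset.erase_cons_head _ _

lemma restrictedCount_rec (n N M : ℕ) :
    restrictedCount n (N + 1) (M + 1) =
      restrictedCount n N (M + 1) +
        if N + 1 ≤ n then restrictedCount (n - (N + 1)) (N + 1) M else 0 := by
  by_cases hn : N + 1 ≤ n
  · rw [if_pos hn]
    unfold restrictedCount
    rw [← Fintype.card_sum]
    refine Fintype.card_congr ?_
    refine ((Equiv.sumCompl (fun p : {p : n.Partition //
        p.parts.card ≤ M + 1 ∧ ∀ i ∈ p.parts, i ≤ N + 1} => (N + 1) ∈ p.1.parts)).symm.trans
      (Equiv.sumComm _ _)).trans (Equiv.sumCongr ?_ ?_)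
    · -- not containing N+1 : equiv to box N × (M+1)
      refine (Equiv.subtypeSubtypeEquivSubtypeInter
        (fun p : n.Partition => p.parts.card ≤ M + 1 ∧ ∀ i ∈ p.parts, i ≤ N + 1)
        (fun p => (N + 1) ∉ p.parts)).trans (Equiv.subtypeEquivRight ?_)
      intro p
      constructor
      · rintro ⟨⟨hc, hb⟩, hm⟩
        refine ⟨hc, fun i hi => ?_⟩
        have := hb i hi
        have : i ≠ N + 1 := fun h => hm (h ▸ hi)
        omega
      · rintro ⟨hc, hb⟩
        refine ⟨⟨hc, fun i hi => (hb i hi).trans (by omega)⟩, fun hm => ?_⟩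
        have := hb _ hm
        omega
    · -- containing N+1 : erase it
      refine (Equiv.subtypeSubtypeEquivSubtypeInter
        (fun p : n.Partition => p.parts.card ≤ M + 1 ∧ ∀ i ∈ p.parts, i ≤ N + 1)
        (fun p => (N + 1) ∈ p.parts)).trans
        ((Equiv.subtypeEquivRight ?_).trans (eraseEquiv n N M hn))
      intro p
      tauto
  · rw [if_neg hn, add_zero]
    unfold restrictedCount
    refine Fintype.card_congr (Equiv.subtypeEquivRight ?_)
    intro p
    have hkey : ∀ i ∈ p.parts, i ≤ n := fun i hi =>
      p.parts_sum ▸ Multiset.le_sum_of_mem hi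
    constructor
    · rintro ⟨hc, hb⟩
      exact ⟨hc, fun i hi => by have := hkey i hi; have := hb i hi; omega⟩
    · rintro ⟨hc, hb⟩
      exact ⟨hc, fun i hi => (hb i hi).trans (by omega)⟩

/-- The generating polynomial. -/
noncomputable def gaussP (N M : ℕ) : ℤ[X] :=
  ∑ n ∈ Finset.range (M * N + 1), (restrictedCount n N M : ℤ[X]) * X ^ n

lemma coeff_gaussP (N M k : ℕ) : (gaussP N M).coeff k = restrictedCount k N M := by
  unfold gaussP
  rw [Polynomial.finset_sum_coeff]
  have hterm : ∀ n : ℕ, ((restrictedCount n N M : ℤ[X]) * X ^ n).coeff k =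
      if n = k then (restrictedCount n N M : ℤ) else 0 := by
    intro n
    rw [Polynomial.coeff_mul_X_pow']
    split_ifs with h1 h2 h3
    · rw [← Polynomial.C_eq_natCast, Polynomial.coeff_C, if_pos (by omega)]
    · rw [← Polynomial.C_eq_natCast, Polynomial.coeff_C, if_neg (by omega)]
    · omega
    · rfl
  simp only [hterm]
  rcases le_or_gt k (M * N) with hk | hk
  · rw [Finset.sum_ite_eq' (Finset.range (M * N + 1)) k, if_pos (Finset.mem_range.mpr (by omega))]
  · rw [restrictedCount_eq_zero hk]
    push_cast
    apply Finset.sum_eq_zero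
    intro n hn
    rw [if_neg]
    have := Finset.mem_range.mp hn
    omega

lemma gaussP_rec (N M : ℕ) :
    gaussP (N + 1) (M + 1) = gaussP N (M + 1) + X ^ (N + 1) * gaussP (N + 1) M := by
  ext k
  rw [Polynomial.coeff_add, coeff_gaussP, coeff_gaussP, Polynomial.X_pow_mul,
    Polynomial.coeff_mul_X_pow', restrictedCount_rec k N M]
  push_cast [apply_ite (Nat.cast : ℕ → ℤ)]
  split_ifs with h
  · rw [coeff_gaussP]
  · rfl

lemma gaussP_zero_left (M : ℕ) : gaussP 0 M = 1 := by
  unfold gaussP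
  rw [Nat.mul_zero, Finset.range_one, Finset.sum_singleton, restrictedCount_zero]
  simp

lemma gaussP_zero_right (N : ℕ) : gaussP N 0 = 1 := by
  unfold gaussP
  rw [Nat.zero_mul, Finset.range_one, Finset.sum_singleton, restrictedCount_zero]
  simp

lemma gauss_main (N M : ℕ) :
    gaussP N M * ∏ j ∈ Finset.Icc 1 N, (1 - (X : ℤ[X]) ^ j) =
      ∏ j ∈ Finset.Icc (M + 1) (N + M), (1 - X ^ j) := by
  induction N generalizing M with
  | zero =>
    rw [gaussP_zero_left, one_mul]
    rw [show Finset.Icc 1 0 = ∅ from rfl, show Finset.Icc (M + 1) (0 + M) = ∅ by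
      rw [Finset.Icc_eq_empty_iff]; omega]
  | succ N ihN =>
    induction M with
    | zero =>
      rw [gaussP_zero_right, one_mul]
    | succ M ihM =>
      have hA : (∏ j ∈ Finset.Icc 1 (N + 1), (1 - (X : ℤ[X]) ^ j)) =
          (∏ j ∈ Finset.Icc 1 N, (1 - (X : ℤ[X]) ^ j)) * (1 - X ^ (N + 1)) :=
        Finset.prod_Icc_succ_top (by omega) _
      rw [gaussP_rec, add_mul, hA, ← mul_assoc, ihN (M + 1),
        mul_assoc (X ^ (N + 1)), ← hA, ihM]
      -- Now pure product manipulation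
      have h1 : Finset.Icc (M + 1) (N + 1 + M) =
          insert (M + 1) (Finset.Icc (M + 2) (N + 1 + M)) := by
        ext x
        simp only [Finset.mem_Icc, Finset.mem_insert]
        omega
      have h2 : (M + 1) ∉ Finset.Icc (M + 2) (N + 1 + M) := by
        intro h
        have := Finset.mem_Icc.mp h
        omega
      have h3 : Finset.Icc (M + 1 + 1) (N + (M + 1)) = Finset.Icc (M + 2) (N + 1 + M) := by
        congr 1
        omega
      have h4 : Finset.Icc (M + 1 + 1) (N + 1 + (M + 1)) = Finset.Icc (M + 2) (N + M + 1 + 1) := by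
        congr 1
        omega
      rw [h1, Finset.prod_insert h2, h3, h4,
        Finset.prod_Icc_succ_top (show M + 2 ≤ N + M + 1 + 1 by omega),
        show Finset.Icc (M + 2) (N + M + 1) = Finset.Icc (M + 2) (N + 1 + M) by congr 1; omega,
        show N + M + 1 + 1 = (N + 1) + (M + 1) by omega, pow_add]
      ring

open Polynomial in
theorem gaussian_polynomial_identity (N M : ℕ) :
    (∑ n ∈ Finset.range (M * N + 1), (restrictedCount n N M : ℤ[X]) * X ^ n) *
        ∏ j ∈ Finset.Icc 1 N, (1 - X ^ j) =
      ∏ j ∈ Finset.Icc (M + 1) (N + M), (1 - X ^ j) := by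
  exact gauss_main N M
end

section
/- For every real number x > 0, one has ∫_0^x t/(e^t − 1) dt = Li₂(1 − e^{−x}). -/
open Real MeasureTheory intervalIntegral Set

/-- The dilogarithm `Li₂(x) = ∑_{k=1}^∞ x^k / k²`. -/
noncomputable def Li2 (x : ℝ) : ℝ := ∑' k : ℕ, x ^ (k + 1) / ((k : ℝ) + 1) ^ 2

/-- The auxiliary function `∑ u^k/(k+1)`, equal to `-log(1-u)/u` for `u ≠ 0`. -/
noncomputable def li2aux (u : ℝ) : ℝ := ∑' k : ℕ, u ^ k / ((k : ℝ) + 1)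

lemma li2aux_eq {u : ℝ} (hu : |u| < 1) (hu0 : u ≠ 0) :
    li2aux u = -Real.log (1 - u) / u := by
  have h := hasSum_pow_div_log_of_abs_lt_one hu
  have h2 : HasSum (fun k : ℕ => u ^ k / ((k : ℝ) + 1)) (-Real.log (1 - u) / u) := by
    have := h.div_const u
    convert this using 2 with k
    · rfl
    field_simp
    ring
  exact h2.tsum_eq

lemma li2aux_continuousOn {y : ℝ} (hy : 0 ≤ y) (hy1 : y < 1) :
    ContinuousOn li2aux (Icc 0 y) := by
  apply continuousOn_tsum (u := fun k : ℕ => y ^ k)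
  · intro k
    exact (continuousOn_pow k).div_const _
  · exact summable_geometric_of_lt_one hy hy1
  · intro k u hu
    rw [norm_div]
    have h1 : |u ^ k| ≤ y ^ k := by
      rw [abs_pow]
      exact pow_le_pow_left₀ (abs_nonneg u) (abs_le.mpr ⟨by linarith [hu.1, hu.2], hu.2⟩) k
    have h2 : (1:ℝ) ≤ ‖((k : ℝ) + 1)‖ := by
      rw [Real.norm_eq_abs, abs_of_pos (by positivity)]
      linarith [Nat.cast_nonneg (α := ℝ) k]
    calc ‖u ^ k‖ / ‖((k : ℝ) + 1)‖ ≤ ‖u ^ k‖ / 1 :=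
          div_le_div_of_nonneg_left (norm_nonneg _) one_pos h2 |>.trans_eq rfl
      _ = |u ^ k| := by simp
      _ ≤ y ^ k := h1

theorem li2_integral (x : ℝ) (hx : 0 < x) :
    ∫ t in (0 : ℝ)..x, t / (Real.exp t - 1) = Li2 (1 - Real.exp (-x)) := by
  set y : ℝ := 1 - Real.exp (-x) with hy_def
  have hy0 : 0 < y := by
    have : Real.exp (-x) < 1 := Real.exp_lt_one_iff.mpr (by linarith)
    simp [hy_def]; linarith
  have hy1 : y < 1 := by
    have : 0 < Real.exp (-x) := Real.exp_pos _
    simp [hy_def]; linarith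
  -- Step A: substitution u = 1 - e^{-t}
  have hderiv : ∀ t ∈ uIcc (0:ℝ) x, HasDerivAt (fun t => 1 - Real.exp (-t)) (Real.exp (-t)) t := by
    intro t _
    have h1 : HasDerivAt (fun t : ℝ => Real.exp (-t)) (-Real.exp (-t)) t := by
      have := (Real.hasDerivAt_exp (-t)).comp t (hasDerivAt_neg t)
      simpa [Function.comp_def] using this
    have h2 : HasDerivAt (fun t => 1 - Real.exp (-t)) (0 - -Real.exp (-t)) t :=
      (hasDerivAt_const t (1:ℝ)).sub h1
    simpa using h2
  have himg : (fun t => 1 - Real.exp (-t)) '' uIcc (0:ℝ) x ⊆ Icc 0 y := by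
    rintro _ ⟨t, ht, rfl⟩
    rw [uIcc_of_le hx.le] at ht
    refine ⟨?_, ?_⟩
    · show (0:ℝ) ≤ 1 - Real.exp (-t)
      have : Real.exp (-t) ≤ 1 := Real.exp_le_one_iff.mpr (by linarith [ht.1])
      linarith
    · show (1:ℝ) - Real.exp (-t) ≤ y
      have : Real.exp (-x) ≤ Real.exp (-t) := Real.exp_le_exp.mpr (by linarith [ht.2])
      simp only [hy_def]; linarith
  have hsubst : (∫ t in (0:ℝ)..x, Real.exp (-t) • li2aux (1 - Real.exp (-t)))
      = ∫ u in (1 - Real.exp (-(0:ℝ)))..(1 - Real.exp (-x)), li2aux u := by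
    have := integral_comp_smul_deriv' (a := (0:ℝ)) (b := x) hderiv
      ((Real.continuous_exp.comp continuous_neg).continuousOn)
      ((li2aux_continuousOn hy0.le hy1).mono himg)
    simpa [Function.comp] using this
  have hLHS : (∫ t in (0:ℝ)..x, t / (Real.exp t - 1))
      = ∫ t in (0:ℝ)..x, Real.exp (-t) • li2aux (1 - Real.exp (-t)) := by
    apply intervalIntegral.integral_congr_ae
    filter_upwards with t ht
    rw [uIoc_of_le hx.le] at ht
    have ht0 : 0 < t := ht.1
    have he1 : Real.exp (-t) < 1 := Real.exp_lt_one_iff.mpr (by linarith)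
    have he0 : 0 < Real.exp (-t) := Real.exp_pos _
    have hu0 : (1 - Real.exp (-t)) ≠ 0 := by linarith
    have habs : |1 - Real.exp (-t)| < 1 := by rw [abs_of_pos (by linarith)]; linarith
    rw [li2aux_eq habs hu0]
    have hlog : Real.log (1 - (1 - Real.exp (-t))) = -t := by
      simp [Real.log_exp]
    rw [show (1 : ℝ) - (1 - Real.exp (-t)) = Real.exp (-t) by ring] at hlog ⊢
    rw [hlog]
    have hexp : Real.exp t - 1 = Real.exp t * (1 - Real.exp (-t)) := by
      rw [mul_sub, ← Real.exp_add]
      simp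
    rw [smul_eq_mul, hexp]
    have het : Real.exp t ≠ 0 := (Real.exp_pos t).ne'
    field_simp
    rw [← Real.exp_add]
    simp
  -- Step B: termwise integration
  have hB : (∫ u in (0:ℝ)..y, li2aux u) = Li2 y := by
    rw [integral_of_le hy0.le]
    unfold li2aux
    rw [MeasureTheory.integral_tsum]
    · unfold Li2
      congr 1
      funext k
      have : (∫ u in Ioc (0:ℝ) y, u ^ k / ((k:ℝ)+1)) = ∫ u in (0:ℝ)..y, u ^ k / ((k:ℝ)+1) :=
        (integral_of_le hy0.le).symm
      rw [this, intervalIntegral.integral_div, integral_pow]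
      have hk : ((k:ℝ)+1) ≠ 0 := by positivity
      rw [sq]
      field_simp
      simp
    · intro k
      exact ((continuous_pow k).div_const _).aestronglyMeasurable
    · rw [← lt_top_iff_ne_top]
      calc ∑' k : ℕ, ∫⁻ u in Ioc (0:ℝ) y, ‖u ^ k / ((k:ℝ)+1)‖₊
          ≤ ∑' k : ℕ, ∫⁻ _ in Ioc (0:ℝ) y, (ENNReal.ofReal (y ^ k)) := by
            apply ENNReal.tsum_le_tsum
            intro k
            apply lintegral_mono_ae
            filter_upwards [ae_restrict_mem measurableSet_Ioc] with u hu
            have h1 : ‖u ^ k / ((k:ℝ)+1)‖ ≤ y ^ k := by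
              rw [norm_div, norm_pow]
              have hub : ‖u‖ ≤ y := by
                rw [Real.norm_eq_abs, abs_of_pos hu.1]; exact hu.2
              calc ‖u‖ ^ k / ‖((k:ℝ)+1)‖ ≤ y ^ k / 1 := by
                    apply div_le_div₀ (by positivity)
                      (pow_le_pow_left₀ (norm_nonneg u) hub k) one_pos
                    rw [Real.norm_eq_abs, abs_of_pos (by positivity)]
                    linarith [Nat.cast_nonneg (α := ℝ) k]
                _ = y ^ k := div_one _
            calc (‖u ^ k / ((k:ℝ)+1)‖₊ : ENNReal) = ENNReal.ofReal ‖u ^ k / ((k:ℝ)+1)‖ := by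
                  rw [ofReal_norm, enorm_eq_nnnorm]
              _ ≤ ENNReal.ofReal (y ^ k) := ENNReal.ofReal_le_ofReal h1
        _ = ∑' k : ℕ, (ENNReal.ofReal (y ^ k)) * volume (Ioc (0:ℝ) y) := by
            simp [MeasureTheory.lintegral_const]
        _ = (∑' k : ℕ, (ENNReal.ofReal y) ^ k) * volume (Ioc (0:ℝ) y) := by
            rw [ENNReal.tsum_mul_right]
            congr 1
            refine tsum_congr fun k => ?_
            rw [ENNReal.ofReal_pow hy0.le]
        _ < ⊤ := by
            rw [ENNReal.tsum_geometric]
            apply ENNReal.mul_lt_top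
            · rw [ENNReal.inv_lt_top]
              rw [tsub_pos_iff_lt]
              exact ENNReal.ofReal_lt_one.mpr hy1
            · rw [Real.volume_Ioc]
              exact ENNReal.ofReal_lt_top
  rw [hLHS, hsubst, show (1:ℝ) - Real.exp (-(0:ℝ)) = 0 by simp]
  exact hB
end

section
/- Let α, β > 0 be real numbers with αβ > 2. Then there exists a unique pair of real numbers c₁, c₂ > 0 satisfying the system c₁ = α·A(c₁,c₂) and c₂ = β·A(c₁,c₂). -/
open Set Filter intervalIntegral Real Topology MeasureTheory


noncomputable def ff (x : ℝ) : ℝ := if x = 0 then 1 else x / (Real.exp x - 1)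
noncomputable def dd (x : ℝ) : ℝ :=
  (Real.exp x - 1 - x * Real.exp x) / (Real.exp x - 1) ^ 2
noncomputable def ee (x : ℝ) : ℝ :=
  Real.exp x * (x * (Real.exp x + 1) - 2 * (Real.exp x - 1)) / (Real.exp x - 1) ^ 3

lemma expm1_ne {x : ℝ} (hx : x ≠ 0) : Real.exp x - 1 ≠ 0 :=
  sub_ne_zero.2 fun h => hx ((Real.exp_eq_one_iff x).1 h)

lemma ff_eq {x : ℝ} (hx : x ≠ 0) : ff x = x / (Real.exp x - 1) := if_neg hx

lemma hasDerivAt_ff {x : ℝ} (hx : x ≠ 0) : HasDerivAt ff (dd x) x := by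
  have h1 : HasDerivAt (fun y : ℝ => y / (Real.exp y - 1)) (dd x) x := by
    have := (hasDerivAt_id x).div ((Real.hasDerivAt_exp x).sub_const 1) (expm1_ne hx)
    refine this.congr_deriv ?_
    unfold dd; simp only [id_eq]; ring
  apply h1.congr_of_eventuallyEq
  filter_upwards [eventually_ne_nhds hx] with y hy
  exact ff_eq hy

lemma cont_ff : Continuous ff := by
  rw [continuous_iff_continuousAt]
  intro x
  rcases eq_or_ne x 0 with rfl | hx
  · have h1 : Tendsto (slope Real.exp 0) (𝓝[≠] 0) (𝓝 1) := by
      have := (Real.hasDerivAt_exp 0)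
      rw [hasDerivAt_iff_tendsto_slope] at this
      simpa using this
    have h2 : Tendsto (fun y : ℝ => y / (Real.exp y - 1)) (𝓝[≠] 0) (𝓝 1) := by
      have h3 := h1.inv₀ one_ne_zero
      simp only [inv_one] at h3
      apply h3.congr'
      filter_upwards [self_mem_nhdsWithin] with y hy
      simp [slope_def_field, Real.exp_zero, div_div_eq_mul_div, inv_div]
    have h4 : Tendsto ff (𝓝[≠] 0) (𝓝 (ff 0)) := by
      simp only [ff, if_pos rfl]
      apply h2.congr'
      filter_upwards [self_mem_nhdsWithin] with y hy
      exact (ff_eq hy).symm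
    unfold ContinuousAt
    rw [← nhdsNE_sup_pure]
    exact Tendsto.sup h4 (tendsto_pure_nhds ff 0)
  · exact ((hasDerivAt_ff hx).continuousAt)



lemma expm1_pos {x : ℝ} (hx : 0 < x) : 0 < Real.exp x - 1 :=
  sub_pos.2 (by simpa using Real.exp_lt_exp.2 hx)

lemma hasDerivAt_dd {x : ℝ} (hx : x ≠ 0) : HasDerivAt dd (ee x) x := by
  have hN : HasDerivAt (fun y : ℝ => Real.exp y - 1 - y * Real.exp y)
      (-(x * Real.exp x)) x := by
    have := ((Real.hasDerivAt_exp x).sub_const 1).sub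
      ((hasDerivAt_id x).mul (Real.hasDerivAt_exp x))
    refine this.congr_deriv ?_
    simp only [id_eq]; ring
  have hD : HasDerivAt (fun y : ℝ => (Real.exp y - 1) ^ 2)
      (2 * (Real.exp x - 1) * Real.exp x) x := by
    have := ((Real.hasDerivAt_exp x).sub_const 1).pow 2
    refine this.congr_deriv ?_
    ring
  have := hN.div hD (pow_ne_zero 2 (expm1_ne hx))
  refine this.congr_deriv ?_
  unfold ee
  have h := expm1_ne hx
  field_simp
  ring

lemma q_pos {x : ℝ} (hx : 0 < x) : 0 < x * Real.exp x - Real.exp x + 1 := by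
  set q : ℝ → ℝ := fun y => y * Real.exp y - Real.exp y + 1 with hq
  have hd : ∀ y : ℝ, HasDerivAt q (y * Real.exp y) y := by
    intro y
    have := (((hasDerivAt_id y).mul (Real.hasDerivAt_exp y)).sub
      (Real.hasDerivAt_exp y)).add_const 1
    refine this.congr_deriv ?_
    simp only [id_eq]; ring
  have hmono : StrictMonoOn q (Ici (0:ℝ)) := by
    apply strictMonoOn_of_deriv_pos (convex_Ici 0)
      (fun y _ => (hd y).continuousAt.continuousWithinAt)
    intro y hy
    rw [interior_Ici] at hy
    rw [(hd y).deriv]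
    exact mul_pos hy (Real.exp_pos y)
  have := hmono (self_mem_Ici) (le_of_lt hx) hx
  simpa [hq] using this

lemma p_pos {x : ℝ} (hx : 0 < x) :
    0 < x * (Real.exp x + 1) - 2 * (Real.exp x - 1) := by
  set p : ℝ → ℝ := fun y => y * (Real.exp y + 1) - 2 * (Real.exp y - 1) with hp
  have hd : ∀ y : ℝ, HasDerivAt p (y * Real.exp y - Real.exp y + 1) y := by
    intro y
    have := ((hasDerivAt_id y).mul ((Real.hasDerivAt_exp y).add_const 1)).sub
      (((Real.hasDerivAt_exp y).sub_const 1).const_mul 2)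
    refine this.congr_deriv ?_
    simp only [id_eq]; ring
  have hmono : StrictMonoOn p (Ici (0:ℝ)) := by
    apply strictMonoOn_of_deriv_pos (convex_Ici 0)
      (fun y _ => (hd y).continuousAt.continuousWithinAt)
    intro y hy
    rw [interior_Ici] at hy
    rw [(hd y).deriv]
    exact q_pos hy
  have := hmono (self_mem_Ici) (le_of_lt hx) hx
  simpa [hp] using this

lemma ee_pos {x : ℝ} (hx : 0 < x) : 0 < ee x := by
  unfold ee
  have h := expm1_pos hx
  apply div_pos (mul_pos (Real.exp_pos x) (p_pos hx))
  positivity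

lemma dd_mono : StrictMonoOn dd (Ioi (0:ℝ)) := by
  apply strictMonoOn_of_deriv_pos (convex_Ioi 0)
    (fun y hy => (hasDerivAt_dd (ne_of_gt hy)).continuousAt.continuousWithinAt)
  intro y hy
  rw [interior_Ioi] at hy
  rw [(hasDerivAt_dd (ne_of_gt hy)).deriv]
  exact ee_pos hy

lemma ff_convex : StrictConvexOn ℝ (Ici (0:ℝ)) ff := by
  apply StrictMonoOn.strictConvexOn_of_deriv (convex_Ici 0) cont_ff.continuousOn
  rw [interior_Ici]
  intro a ha b hb hab
  rw [(hasDerivAt_ff (ne_of_gt ha)).deriv, (hasDerivAt_ff (ne_of_gt hb)).deriv]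
  exact dd_mono ha hb hab

lemma dd_tendsto : Tendsto dd (𝓝[>] (0:ℝ)) (𝓝 (-(1/2))) := by
  have key : Tendsto (fun x : ℝ => (Real.exp x - 1 - x * Real.exp x) / (Real.exp x - 1) ^ 2)
      (𝓝[>] (0:ℝ)) (𝓝 (-(1/2))) := by
    apply HasDerivAt.lhopital_zero_nhdsGT
      (f' := fun x => -(x * Real.exp x)) (g' := fun x => 2 * (Real.exp x - 1) * Real.exp x)
    · filter_upwards [self_mem_nhdsWithin] with x hx
      have := ((Real.hasDerivAt_exp x).sub_const 1).sub
        ((hasDerivAt_id x).mul (Real.hasDerivAt_exp x))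
      refine this.congr_deriv ?_
      simp only [id_eq]; ring
    · filter_upwards [self_mem_nhdsWithin] with x hx
      have := ((Real.hasDerivAt_exp x).sub_const 1).pow 2
      refine this.congr_deriv ?_
      ring
    · filter_upwards [self_mem_nhdsWithin] with x hx
      have h1 := expm1_pos (show (0:ℝ) < x from hx)
      positivity
    · have : Tendsto (fun x : ℝ => Real.exp x - 1 - x * Real.exp x) (𝓝 0) (𝓝 0) := by
        have hc : Continuous fun x : ℝ => Real.exp x - 1 - x * Real.exp x := by continuity
        have := hc.tendsto 0
        simpa using this
      exact this.mono_left nhdsWithin_le_nhds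
    · have : Tendsto (fun x : ℝ => (Real.exp x - 1) ^ 2) (𝓝 0) (𝓝 0) := by
        have hc : Continuous fun x : ℝ => (Real.exp x - 1) ^ 2 := by continuity
        have := hc.tendsto 0
        simpa using this
      exact this.mono_left nhdsWithin_le_nhds
    · have h2 : Tendsto (fun x : ℝ => -(ff x) / 2) (𝓝 0) (𝓝 (-(1/2))) := by
        have h2' := (cont_ff.tendsto 0).neg.div_const 2
        have hff0 : ff 0 = 1 := if_pos rfl
        rw [hff0] at h2'
        convert h2' using 2
        norm_num
      apply (h2.mono_left nhdsWithin_le_nhds).congr'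
      filter_upwards [self_mem_nhdsWithin] with x hx
      have hx0 : x ≠ 0 := ne_of_gt hx
      rw [ff_eq hx0]
      have h1 := expm1_ne hx0
      have h3 := (Real.exp_pos x).ne'
      field_simp
  exact key

lemma ff_nonneg {x : ℝ} (hx : 0 ≤ x) : 0 ≤ ff x := by
  rcases eq_or_lt_of_le hx with rfl | h
  · simp [ff]
  · rw [ff_eq (ne_of_gt h)]
    exact div_nonneg h.le (expm1_pos h).le

lemma ff_le_one {x : ℝ} (hx : 0 ≤ x) : ff x ≤ 1 := by
  rcases eq_or_lt_of_le hx with rfl | h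
  · simp [ff]
  · rw [ff_eq (ne_of_gt h)]
    rw [div_le_one (expm1_pos h)]
    linarith [Real.add_one_le_exp x]



lemma slope_lt_ff {a₁ b₁ a₂ b₂ : ℝ} (h0 : 0 ≤ a₁) (h1 : a₁ < b₁) (ha : a₁ < a₂)
    (hb : b₁ < b₂) (h2 : a₂ < b₂) :
    (ff b₁ - ff a₁) / (b₁ - a₁) < (ff b₂ - ff a₂) / (b₂ - a₂) := by
  have m1 : a₁ ∈ Ici (0:ℝ) := h0
  have mb1 : b₁ ∈ Ici (0:ℝ) := le_trans h0 h1.le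
  have ma2 : a₂ ∈ Ici (0:ℝ) := le_trans h0 ha.le
  have mb2 : b₂ ∈ Ici (0:ℝ) := le_trans h0 (ha.trans h2).le
  have s1 : (ff b₁ - ff a₁) / (b₁ - a₁) < (ff b₂ - ff a₁) / (b₂ - a₁) :=
    ff_convex.secant_strict_mono m1 mb1 mb2 (ne_of_gt h1) (ne_of_gt (ha.trans h2)) hb
  have s2 : (ff a₁ - ff b₂) / (a₁ - b₂) < (ff a₂ - ff b₂) / (a₂ - b₂) :=
    ff_convex.secant_strict_mono mb2 m1 ma2 (ne_of_lt (ha.trans h2)) (ne_of_lt h2) ha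
  have e1 : (ff a₁ - ff b₂) / (a₁ - b₂) = (ff b₂ - ff a₁) / (b₂ - a₁) := by
    rw [← neg_div_neg_eq, neg_sub, neg_sub]
  have e2 : (ff a₂ - ff b₂) / (a₂ - b₂) = (ff b₂ - ff a₂) / (b₂ - a₂) := by
    rw [← neg_div_neg_eq, neg_sub, neg_sub]
  rw [e1] at s2
  rw [e2] at s2
  linarith

lemma slope_le_dd {a b c : ℝ} (h0 : 0 ≤ a) (hab : a < b) (hbc : b ≤ c) :
    (ff b - ff a) / (b - a) ≤ dd c := by
  obtain ⟨ξ, hξ, hξ'⟩ := exists_hasDerivAt_eq_slope ff dd hab cont_ff.continuousOn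
    (fun x hx => hasDerivAt_ff (ne_of_gt (lt_of_le_of_lt h0 hx.1)))
  rw [← hξ']
  have hξ0 : (0:ℝ) < ξ := lt_of_le_of_lt h0 hξ.1
  have hξc : ξ < c := lt_of_lt_of_le hξ.2 hbc
  exact (dd_mono (mem_Ioi.2 hξ0) (mem_Ioi.2 (hξ0.trans hξc)) hξc).le

noncomputable def FF (α β t : ℝ) : ℝ :=
  (∫ x in (0:ℝ)..α*t, ff x) - ∫ x in β*t..(α*t+β*t), ff x

lemma cont_g (t c : ℝ) : Continuous fun u : ℝ => ff (t*u) - ff (t*u + c) :=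
  (cont_ff.comp (continuous_const.mul continuous_id)).sub
    (cont_ff.comp ((continuous_const.mul continuous_id).add continuous_const))

lemma FF_rep (α β : ℝ) {t : ℝ} (ht : t ≠ 0) :
    FF α β t = t * ∫ u in (0:ℝ)..α, (ff (t*u) - ff (t*u + β*t)) := by
  have i1 : (∫ x in β*t..(α*t+β*t), ff x) = ∫ x in (0:ℝ)..α*t, ff (x + β*t) := by
    rw [integral_comp_add_right (fun x => ff x)]
    norm_num
  have i2 : FF α β t = ∫ x in (0:ℝ)..α*t, (ff x - ff (x + β*t)) := by
    rw [FF, i1]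
    exact (integral_sub (cont_ff.intervalIntegrable _ _)
      ((cont_ff.comp (continuous_id.add continuous_const)).intervalIntegrable _ _)).symm
  rw [i2]
  have i3 : (∫ u in (0:ℝ)..α, (ff (t*u) - ff (t*u + β*t)))
      = t⁻¹ • ∫ x in (t*0)..(t*α), (ff x - ff (x + β*t)) :=
    integral_comp_mul_left (fun x => ff x - ff (x + β*t)) ht
  rw [i3, smul_eq_mul, ← mul_assoc, mul_inv_cancel₀ ht, one_mul, mul_zero, mul_comm t α]

lemma FF_cont (α β : ℝ) : Continuous fun t => FF α β t := by
  have hPP : Continuous fun t : ℝ => ∫ x in (0:ℝ)..t, ff x := by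
    have : ∀ b : ℝ, HasDerivAt (fun u : ℝ => ∫ x in (0:ℝ)..u, ff x) (ff b) b := fun b =>
      integral_hasDerivAt_right (cont_ff.intervalIntegrable _ _)
        (cont_ff.stronglyMeasurable.stronglyMeasurableAtFilter) cont_ff.continuousAt
    exact continuous_iff_continuousAt.2 fun b => (this b).continuousAt
  have hsplit : (fun t : ℝ => ∫ x in β*t..(α*t+β*t), ff x)
      = fun t : ℝ => (∫ x in (0:ℝ)..(α*t+β*t), ff x) - ∫ x in (0:ℝ)..β*t, ff x := by
    funext t
    rw [integral_interval_sub_left (cont_ff.intervalIntegrable _ _)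
      (cont_ff.intervalIntegrable _ _)]
  unfold FF
  apply Continuous.sub (hPP.comp (by continuity))
  rw [hsplit]
  exact (hPP.comp (by continuity)).sub (hPP.comp (by continuity))

lemma FF_lower (α β : ℝ) (hα : 0 < α) (hβ : 0 < β) (hαβ : 2 < α * β) :
    ∃ t₀ : ℝ, 0 < t₀ ∧ t₀^2 < FF α β t₀ := by
  have hαβ0 : (0:ℝ) < α * β := mul_pos hα hβ
  have hc : -(1/2) < -(1/(α*β)) := by
    have : 1/(α*β) < 1/2 := by
      rw [div_lt_div_iff₀ hαβ0 (by norm_num)]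
      linarith
    linarith
  have hev := dd_tendsto.eventually_lt_const hc
  rw [eventually_iff, mem_nhdsGT_iff_exists_Ioo_subset] at hev
  obtain ⟨δ, hδ, hsub⟩ := hev
  rw [mem_Ioi] at hδ
  have hαβpos : (0:ℝ) < α + β := by linarith
  set t₀ : ℝ := δ / (2*(α+β)) with ht₀def
  have ht₀ : 0 < t₀ := div_pos hδ (by linarith)
  have hs₀ : (α+β)*t₀ = δ/2 := by
    rw [ht₀def]
    field_simp
  have hdd : dd ((α+β)*t₀) < -(1/(α*β)) := by
    apply hsub
    rw [hs₀]
    exact ⟨by linarith, by linarith⟩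
  refine ⟨t₀, ht₀, ?_⟩
  have hptw : ∀ u ∈ Icc (0:ℝ) α,
      β*t₀ * (-dd ((α+β)*t₀)) ≤ ff (t₀*u) - ff (t₀*u + β*t₀) := by
    intro u hu
    have ha0 : 0 ≤ t₀*u := mul_nonneg ht₀.le hu.1
    have hab : t₀*u < t₀*u + β*t₀ := by nlinarith
    have hbc : t₀*u + β*t₀ ≤ (α+β)*t₀ := by nlinarith [hu.2]
    have := slope_le_dd ha0 hab hbc
    rw [show t₀*u + β*t₀ - t₀*u = β*t₀ by ring] at this
    rw [div_le_iff₀ (by positivity)] at this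
    nlinarith [this]
  have hint : (α - 0) * (β*t₀ * (-dd ((α+β)*t₀)))
      ≤ ∫ u in (0:ℝ)..α, (ff (t₀*u) - ff (t₀*u + β*t₀)) := by
    have := integral_mono_on (μ := volume) (a := (0:ℝ)) (b := α) hα.le
      intervalIntegrable_const ((cont_g t₀ (β*t₀)).intervalIntegrable _ _) hptw
    rwa [intervalIntegral.integral_const, smul_eq_mul] at this
  rw [FF_rep α β (ne_of_gt ht₀)]
  have hpos : 0 < -dd ((α+β)*t₀) := by
    have : (0:ℝ) < 1/(α*β) := by positivity
    linarith
  calc t₀^2 = t₀ * ((α-0) * (β*t₀ * (1/(α*β)))) := by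
        field_simp
        ring
  _ < t₀ * ((α-0) * (β*t₀ * (-dd ((α+β)*t₀)))) := by
      apply mul_lt_mul_of_pos_left _ ht₀
      apply mul_lt_mul_of_pos_left _ (by linarith : (0:ℝ) < α - 0)
      apply mul_lt_mul_of_pos_left _ (by positivity)
      linarith [hdd]
  _ ≤ t₀ * ∫ u in (0:ℝ)..α, (ff (t₀*u) - ff (t₀*u + β*t₀)) :=
      mul_le_mul_of_nonneg_left hint ht₀.le

lemma FF_upper (α β : ℝ) (hα : 0 < α) (hβ : 0 < β) {T : ℝ} (hT : α < T) (hT0 : 0 < T) :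
    FF α β T < T^2 := by
  have h1 : (∫ x in (0:ℝ)..α*T, ff x) ≤ α*T := by
    have := integral_mono_on (μ := volume) (a := (0:ℝ)) (b := α*T)
      (by positivity) (cont_ff.intervalIntegrable _ _) intervalIntegrable_const
      (fun x hx => ff_le_one hx.1)
    rwa [intervalIntegral.integral_const, smul_eq_mul, sub_zero, mul_one] at this
  have h2 : 0 ≤ ∫ x in β*T..(α*T+β*T), ff x := by
    apply integral_nonneg (by nlinarith)
    intro u hu
    exact ff_nonneg (le_trans (by positivity) hu.1)
  have h3 : FF α β T ≤ α * T := by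
    rw [FF]; linarith
  nlinarith

lemma FF_inj (α β : ℝ) (hα : 0 < α) (hβ : 0 < β) {t₁ t₂ : ℝ} (h1 : 0 < t₁) (h12 : t₁ < t₂)
    (hv1 : FF α β t₁ = t₁^2) (hv2 : FF α β t₂ = t₂^2) : False := by
  have h2 : 0 < t₂ := h1.trans h12
  have hI : ∀ s : ℝ, 0 < s → FF α β s = s^2 →
      (∫ u in (0:ℝ)..α, (ff (s*u) - ff (s*u + β*s))) = s := by
    intro s hs hv
    have hrep := FF_rep α β (ne_of_gt hs)
    rw [hv] at hrep
    have h'' : s * (∫ u in (0:ℝ)..α, (ff (s*u) - ff (s*u + β*s))) = s * s := by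
      rw [← hrep]
      ring
    exact mul_left_cancel₀ (ne_of_gt hs) h''
  have hW : (0:ℝ) < ∫ u in (0:ℝ)..α,
      ((ff (t₁*u) - ff (t₁*u + β*t₁))/t₁ - (ff (t₂*u) - ff (t₂*u + β*t₂))/t₂) := by
    apply intervalIntegral_pos_of_pos_on
    · exact (((cont_g t₁ (β*t₁)).div_const t₁).sub
        ((cont_g t₂ (β*t₂)).div_const t₂)).intervalIntegrable _ _
    · intro u hu
      have hu0 : 0 < u := hu.1
      have ha0 : (0:ℝ) ≤ t₁*u := by positivity
      have h1b : t₁*u < t₁*u + β*t₁ := by nlinarith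
      have hlt := slope_lt_ff ha0 h1b
        (by nlinarith : t₁*u < t₂*u) (by nlinarith : t₁*u + β*t₁ < t₂*u + β*t₂)
        (by nlinarith : t₂*u < t₂*u + β*t₂)
      rw [show t₁*u + β*t₁ - t₁*u = β*t₁ by ring,
          show t₂*u + β*t₂ - t₂*u = β*t₂ by ring] at hlt
      rw [sub_pos, div_lt_div_iff₀ h2 h1]
      rw [div_lt_div_iff₀ (by positivity) (by positivity)] at hlt
      nlinarith [hlt]
    · exact hα
  have hz : (∫ u in (0:ℝ)..α,
      ((ff (t₁*u) - ff (t₁*u + β*t₁))/t₁ - (ff (t₂*u) - ff (t₂*u + β*t₂))/t₂)) = 0 := by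
    rw [integral_sub (((cont_g t₁ (β*t₁)).div_const t₁).intervalIntegrable _ _)
      (((cont_g t₂ (β*t₂)).div_const t₂).intervalIntegrable _ _),
      intervalIntegral.integral_div, intervalIntegral.integral_div, hI t₁ h1 hv1, hI t₂ h2 hv2,
      div_self (ne_of_gt h1), div_self (ne_of_gt h2), sub_self]
  rw [hz] at hW
  exact lt_irrefl 0 hW

lemma FF_scalar (α β : ℝ) (hα : 0 < α) (hβ : 0 < β) (hαβ : 2 < α * β) :
    ∃! t : ℝ, 0 < t ∧ FF α β t = t ^ 2 := by
  obtain ⟨t₀, ht₀, hlow⟩ := FF_lower α β hα hβ hαβ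
  set T : ℝ := α + t₀ + 1 with hTdef
  have hT : α < T := by rw [hTdef]; linarith
  have hT0 : 0 < T := by rw [hTdef]; linarith
  have hupp : FF α β T < T^2 := FF_upper α β hα hβ hT hT0
  have ht₀T : t₀ ≤ T := by rw [hTdef]; linarith
  have hcont : ContinuousOn (fun t => FF α β t - t^2) (Icc t₀ T) :=
    ((FF_cont α β).sub (continuous_pow 2)).continuousOn
  have hmem : (0:ℝ) ∈ Ioo (FF α β T - T^2) (FF α β t₀ - t₀^2) :=
    ⟨by linarith, by linarith⟩
  obtain ⟨t, ht, htv⟩ := intermediate_value_Ioo' ht₀T hcont hmem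
  refine ⟨t, ⟨ht₀.trans ht.1, by linarith [sub_eq_zero.1 htv]⟩, ?_⟩
  intro s hs
  have htval : FF α β t = t ^ 2 := by
    have := sub_eq_zero.1 htv
    linarith [this]
  rcases lt_trichotomy s t with h | h | h
  · exact absurd (FF_inj α β hα hβ hs.1 h hs.2 htval) not_false
  · exact h
  · exact absurd (FF_inj α β hα hβ (ht₀.trans ht.1) h htval hs.2) not_false


/-- `A(c₁,c₂) = sqrt(∫_0^{c₁} x/(eˣ−1) dx − ∫_{c₂}^{c₁+c₂} x/(eˣ−1) dx)`. -/
noncomputable def A (c₁ c₂ : ℝ) : ℝ :=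
  Real.sqrt ((∫ x in (0 : ℝ)..c₁, x / (Real.exp x - 1)) -
    ∫ x in c₂..(c₁ + c₂), x / (Real.exp x - 1))


lemma int_congr (a b : ℝ) :
    (∫ x in a..b, x / (Real.exp x - 1)) = ∫ x in a..b, ff x := by
  apply intervalIntegral.integral_congr_ae
  have h0 : ∀ᵐ (x:ℝ), x ≠ 0 := by
    rw [ae_iff]
    have h : {x : ℝ | ¬ x ≠ 0} = {0} := by ext; simp
    rw [h]
    exact Real.volume_singleton
  filter_upwards [h0] with x hx _
  exact (ff_eq hx).symm

lemma A_eq (s α β : ℝ) : A (α*s) (β*s) = Real.sqrt (FF α β s) := by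
  rw [A, int_congr, int_congr, FF]

theorem change_of_variables_exists_unique (α β : ℝ) (hα : 0 < α) (hβ : 0 < β)
    (hαβ : 2 < α * β) :
    ∃! c : ℝ × ℝ, 0 < c.1 ∧ 0 < c.2 ∧ c.1 = α * A c.1 c.2 ∧ c.2 = β * A c.1 c.2 := by
  obtain ⟨t, ⟨htpos, htval⟩, huniq⟩ := FF_scalar α β hα hβ hαβ
  have hAt : A (α*t) (β*t) = t := by
    rw [A_eq, htval, Real.sqrt_sq htpos.le]
  refine ⟨(α*t, β*t), ⟨mul_pos hα htpos, mul_pos hβ htpos, by rw [hAt], by rw [hAt]⟩, ?_⟩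
  rintro ⟨c₁, c₂⟩ ⟨h1, h2, h3, h4⟩
  simp only at h1 h2 h3 h4
  obtain ⟨a, hadef⟩ : ∃ a, A c₁ c₂ = a := ⟨_, rfl⟩
  rw [hadef] at h3 h4
  have ha : 0 < a := by
    by_contra h
    push_neg at h
    nlinarith
  have haa : Real.sqrt (FF α β a) = a := by
    rw [← A_eq, ← h3, ← h4, hadef]
  have hFa : FF α β a = a^2 := by
    have hnn : 0 ≤ FF α β a := by
      by_contra h
      push_neg at h
      have h0 : Real.sqrt (FF α β a) = 0 := Real.sqrt_eq_zero_of_nonpos h.le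
      rw [haa] at h0
      linarith
    have hsq := Real.sq_sqrt hnn
    rw [haa] at hsq
    exact hsq.symm
  have hat : a = t := huniq a ⟨ha, hFa⟩
  simp only [Prod.mk.injEq]
  exact ⟨by rw [h3, hat], by rw [h4, hat]⟩
end

section
/- For every δ > 0 there exist constants c̄ > 0 and Ā > 0, depending only on δ, such that for all real α, β with min(α,β) ≥ √2 + δ and all c₁, c₂ > 0 satisfying c₁ = α·A(c₁,c₂) and c₂ = β·A(c₁,c₂), one has min(c₁,c₂) ≥ c̄ and A(c₁,c₂) ≥ Ā. -/
open MeasureTheory intervalIntegral Set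

namespace LBAux

noncomputable def f (x : ℝ) : ℝ := x / (Real.exp x - 1)

lemma den_pos {x : ℝ} (hx : 0 < x) : 0 < Real.exp x - 1 := by
  have := Real.add_one_le_exp (x/2)
  nlinarith [Real.add_one_le_exp x]

lemma f_nonneg {x : ℝ} (hx : 0 ≤ x) : 0 ≤ f x := by
  rcases eq_or_lt_of_le hx with h | h
  · simp [f, ← h]
  · exact div_nonneg h.le (den_pos h).le

lemma f_le_one {x : ℝ} (hx : 0 ≤ x) : f x ≤ 1 := by
  rcases eq_or_lt_of_le hx with h | h
  · simp [f, ← h]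
  · rw [f, div_le_one (den_pos h)]
    nlinarith [Real.add_one_le_exp x]

lemma exp_ub {x : ℝ} (hx : 0 < x) (hx1 : x ≤ 1) :
    Real.exp x ≤ 1 + x + x^2/2 + (2/9) * x^3 := by
  have h := Real.exp_bound (x := x) (by rw [abs_of_pos hx]; exact hx1) (n := 3) (by norm_num)
  rw [abs_of_pos hx] at h
  have h1 := (abs_sub_le_iff.1 h).1
  simp [Finset.sum_range_succ, Nat.factorial] at h1
  nlinarith [pow_pos hx 3]

lemma exp_lb {x : ℝ} (hx : 0 < x) (hx1 : x ≤ 1) :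
    1 + x + x^2/2 - (2/9) * x^3 ≤ Real.exp x := by
  have h := Real.exp_bound (x := x) (by rw [abs_of_pos hx]; exact hx1) (n := 3) (by norm_num)
  rw [abs_of_pos hx] at h
  have h1 := (abs_sub_le_iff.1 h).2
  simp [Finset.sum_range_succ, Nat.factorial] at h1
  nlinarith [pow_pos hx 3]

/-- Lower bound `f x ≥ 1 - x/2 - (2/9)x²` on `(0,1]`. -/
lemma f_lower {x : ℝ} (hx : 0 < x) (hx1 : x ≤ 1) :
    1 - x/2 - (2/9) * x^2 ≤ f x := by
  have hub := exp_ub hx hx1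
  have hd := den_pos hx
  rw [f, le_div_iff₀ hd]
  nlinarith [pow_pos hx 3, sq_nonneg x, pow_pos hx 2, mul_pos (mul_pos hx hx) hx]

/-- Upper bound `f y ≤ 1 - y/2 + y²` on `(0,1]`. -/
lemma f_upper_local {y : ℝ} (hy : 0 < y) (hy1 : y ≤ 1) :
    f y ≤ 1 - y/2 + y^2 := by
  have hlb := exp_lb hy hy1
  have hd := den_pos hy
  rw [f, div_le_iff₀ hd]
  nlinarith [pow_pos hy 3, pow_pos hy 2, sq_nonneg y, mul_pos (mul_pos hy hy) hy,
    mul_pos (mul_pos (mul_pos hy hy) hy) hy]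

/-- Global upper bound `f y ≤ 4/(4+y)` for `y ≥ 0`. -/
lemma f_upper_global {y : ℝ} (hy : 0 ≤ y) : f y ≤ 4 / (4 + y) := by
  rcases eq_or_lt_of_le hy with h | h
  · rw [f, ← h]; norm_num
  · have h2 : 1 + y/2 ≤ Real.exp (y/2) := by
      have := Real.add_one_le_exp (y/2); linarith
    have hsq : (1 + y/2)^2 ≤ Real.exp y := by
      have hp := Real.exp_pos (y/2)
      have hmul : Real.exp (y/2) * Real.exp (y/2) = Real.exp y := by
        rw [← Real.exp_add]; ring_nf
      nlinarith
    have hd := den_pos h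
    rw [f, div_le_div_iff₀ hd (by linarith)]
    nlinarith

/-- `f` is antitone on `(0,∞)`. -/
lemma f_anti {a b : ℝ} (ha : 0 < a) (hab : a ≤ b) : f b ≤ f a := by
  have hda := den_pos ha
  have hdb := den_pos (lt_of_lt_of_le ha hab)
  rw [f, f, div_le_div_iff₀ hdb hda]
  have h1 : Real.exp a * (1 + (b - a)) ≤ Real.exp b := by
    have h := Real.add_one_le_exp (b - a)
    have := Real.exp_pos a
    calc Real.exp a * (1 + (b - a)) ≤ Real.exp a * Real.exp (b - a) := by nlinarith
      _ = Real.exp b := by rw [← Real.exp_add]; ring_nf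
  have h2 : Real.exp a * (1 - a) ≤ 1 := by
    have h := Real.add_one_le_exp (-a)
    have hp := Real.exp_pos a
    have : Real.exp a * Real.exp (-a) = 1 := by rw [← Real.exp_add]; simp
    nlinarith
  nlinarith [mul_nonneg (sub_nonneg.2 hab) (sub_nonneg.2 h2), Real.exp_pos a]

lemma f_measurable : Measurable f :=
  measurable_id.div ((Real.measurable_exp).sub measurable_const)

/-- Interval integrability of `f` on intervals in `[0,∞)`. -/
lemma f_intble {a b : ℝ} (ha : 0 ≤ a) (hb : 0 ≤ b) : IntervalIntegrable f volume a b := by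
  rw [intervalIntegrable_iff]
  apply Measure.integrableOn_of_bounded (M := 1)
  · exact ne_of_lt (measure_Ioc_lt_top)
  · exact f_measurable.aestronglyMeasurable
  · refine ae_restrict_of_forall_mem measurableSet_uIoc (fun x hx => ?_)
    have hx0 : 0 ≤ x := by
      rcases Set.mem_uIoc.mp hx with h | h
      · exact le_trans ha h.1.le
      · exact le_trans hb h.1.le
    rw [Real.norm_eq_abs, abs_of_nonneg (f_nonneg hx0)]
    exact f_le_one hx0

lemma f_shift_intble {c u : ℝ} (hc : 0 < c) (hu : 0 ≤ u) :
    IntervalIntegrable (fun x => f (x + c)) volume 0 u := by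
  have h := (f_intble (le_of_lt hc) (by linarith : (0:ℝ) ≤ u + c)).comp_add_right c
  simpa using h

/-- almost-everywhere on `[0,u]` from pointwise on `(0,u]`. -/
lemma ae_Icc {u : ℝ} {P : ℝ → Prop} (h : ∀ x, 0 < x → x ≤ u → P x) :
    ∀ᵐ x ∂(volume.restrict (Icc (0:ℝ) u)), P x := by
  have h0 : ∀ᵐ x : ℝ, x ≠ 0 := by
    rw [ae_iff]
    have : {x : ℝ | ¬x ≠ 0} = {0} := by ext y; simp
    rw [this]; exact Real.volume_singleton
  filter_upwards [ae_restrict_mem measurableSet_Icc, ae_restrict_of_ae h0] with x hx hx0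
  exact h x (lt_of_le_of_ne hx.1 (Ne.symm hx0)) hx.2

/-- lower bound by a constant on `[0,u]`. -/
lemma integral_const_le {u K : ℝ} {g : ℝ → ℝ} (hu : 0 ≤ u)
    (hg : IntervalIntegrable g volume 0 u)
    (h : ∀ x, 0 < x → x ≤ u → K ≤ g x) : K * u ≤ ∫ x in (0:ℝ)..u, g x := by
  have := integral_mono_ae_restrict (μ := volume) (a := (0:ℝ)) (b := u) hu
    (intervalIntegrable_const (c := K)) hg (ae_Icc h)
  simpa [mul_comm] using this

lemma A_sq {c₁ c₂ : ℝ} (h1 : 0 < c₁) (h2 : 0 < c₂) :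
    (A c₁ c₂)^2 = ∫ x in (0:ℝ)..c₁, (f x - f (x + c₂)) := by
  have hshift : (∫ x in c₂..(c₁ + c₂), f x) = ∫ x in (0:ℝ)..c₁, f (x + c₂) := by
    rw [intervalIntegral.integral_comp_add_right (a := (0:ℝ)) (b := c₁) f c₂, zero_add]
  have hint1 : IntervalIntegrable f volume 0 c₁ := f_intble le_rfl h1.le
  have hint2 := f_shift_intble h2 h1.le
  have harg : ((∫ x in (0:ℝ)..c₁, x / (Real.exp x - 1)) -
      ∫ x in c₂..(c₁ + c₂), x / (Real.exp x - 1)) = ∫ x in (0:ℝ)..c₁, (f x - f (x + c₂)) := by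
    show (∫ x in (0:ℝ)..c₁, f x) - (∫ x in c₂..(c₁ + c₂), f x) = _
    rw [intervalIntegral.integral_sub hint1 hint2, hshift]
  have hnn : 0 ≤ ∫ x in (0:ℝ)..c₁, (f x - f (x + c₂)) := by
    apply intervalIntegral.integral_nonneg_of_ae_restrict h1.le
    exact ae_Icc (fun x hx _ => sub_nonneg.2 (f_anti hx (by linarith)))
  rw [A, harg, Real.sq_sqrt hnn]

noncomputable def sdel (δ : ℝ) : ℝ := min ((1/2 - 1/(Real.sqrt 2 + δ)^2)/5) (1/10)

lemma q_gt_two {δ : ℝ} (hδ : 0 < δ) : 2 < (Real.sqrt 2 + δ)^2 := by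
  have h2 : (Real.sqrt 2)^2 = 2 := Real.sq_sqrt (by norm_num)
  nlinarith [Real.sqrt_nonneg 2]

lemma sdel_pos {δ : ℝ} (hδ : 0 < δ) : 0 < sdel δ := by
  have hq := q_gt_two hδ
  have hq0 : (0:ℝ) < (Real.sqrt 2 + δ)^2 := by linarith
  have : 1/(Real.sqrt 2 + δ)^2 < 1/2 := by
    rw [div_lt_div_iff₀ hq0 (by norm_num)]; linarith
  apply lt_min (by linarith) (by norm_num)

lemma sdel_le {δ : ℝ} : sdel δ ≤ 1/10 := min_le_right _ _

lemma sdel_le' {δ : ℝ} : sdel δ ≤ (1/2 - 1/(Real.sqrt 2 + δ)^2)/5 := min_le_left _ _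

set_option maxHeartbeats 1600000 in
lemma core (s q c₁ c₂ : ℝ) (hs0 : 0 < s) (hs10 : s ≤ 1/10)
    (hq : 2 < q) (hse : s * 5 ≤ 1/2 - 1/q)
    (h1 : 0 < c₁) (h2 : 0 < c₂) (h12 : c₁ ≤ c₂)
    (hIq : (A c₁ c₂)^2 * q ≤ c₁^2) :
    s / 9 ≤ c₁ ∧ s / 18 ≤ A c₁ c₂ := by
  have hq0 : (0:ℝ) < q := by linarith
  have hAnn : 0 ≤ A c₁ c₂ := Real.sqrt_nonneg _
  have hI := A_sq h1 h2
  -- Step 1: s < c₂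
  have hc2s : s < c₂ := by
    by_contra hcon
    push_neg at hcon
    have hKle : c₂ * (1/2 - 38/9 * c₂) * c₁ ≤ ∫ x in (0:ℝ)..c₁, (f x - f (x + c₂)) := by
      apply integral_const_le h1.le
        ((f_intble le_rfl h1.le).sub (f_shift_intble h2 h1.le))
      intro x hx hxc
      have hx1 : x ≤ 1 := by linarith
      have hL := f_lower hx hx1
      have hyc : x + c₂ ≤ 1 := by linarith
      have hU := f_upper_local (by linarith : (0:ℝ) < x + c₂) hyc
      nlinarith [sq_nonneg x, sq_nonneg c₂, sq_nonneg (x - c₂)]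
    rw [← hI] at hKle
    -- (1/2 - 38/9 c₂) * q ≤ 1, while (1/2 - ε) q = 1 with ε ≥ 5 s ≥ 5 c₂·... contradiction
    have hc1c2 : c₁^2 ≤ c₁ * c₂ := by nlinarith
    have key : c₂ * (1/2 - 38/9 * c₂) * c₁ * q ≤ c₁ * c₂ :=
      le_trans (mul_le_mul_of_nonneg_right hKle hq0.le) (le_trans hIq hc1c2)
    have hpos : 0 < c₁ * c₂ := mul_pos h1 h2
    have hd : (1/2 - 38/9 * c₂) * q ≤ 1 := by
      have hrg : c₂ * (1/2 - 38/9 * c₂) * c₁ * q = c₁ * c₂ * ((1/2 - 38/9 * c₂) * q) := by ring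
      have h' : c₁ * c₂ * ((1/2 - 38/9 * c₂) * q) ≤ c₁ * c₂ * 1 := by
        rw [← hrg]; linarith [key]
      exact le_of_mul_le_mul_left h' hpos
    have hinv : q * (1/q) = 1 := by field_simp
    have e : q * (1/2 - 1/q) = q/2 - 1 := by rw [mul_sub, hinv]; ring
    have h5 : 5*(s*q) ≤ q/2 - 1 := by
      have h := mul_le_mul_of_nonneg_left hse hq0.le
      rw [e] at h
      linear_combination h
    have hd' : q/2 - 38/9*(c₂*q) ≤ 1 := by linear_combination hd
    have h6 : c₂ * q ≤ s * q := mul_le_mul_of_nonneg_right hcon hq0.le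
    have h7 : 0 < s * q := mul_pos hs0 hq0
    linarith
  -- Step 2: s/9 < c₁
  have hc1s : s / 9 ≤ c₁ := by
    by_contra hcon
    push_neg at hcon
    have hKle : s/6 * c₁ ≤ ∫ x in (0:ℝ)..c₁, (f x - f (x + c₂)) := by
      apply integral_const_le h1.le
        ((f_intble le_rfl h1.le).sub (f_shift_intble h2 h1.le))
      intro x hx hxc
      have hx1 : x ≤ 1 := by nlinarith
      have hL := f_lower hx hx1
      have hU := f_upper_global (by linarith : (0:ℝ) ≤ x + c₂)
      have hmono : 4 / (4 + (x + c₂)) ≤ 4 / (4 + s) := by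
        apply div_le_div_of_nonneg_left (by norm_num) (by linarith) (by linarith)
      have h4s : 0 < 4 + s := by linarith
      have hfrac : 4/(4+s) ≤ 1 - (10/41)*s := by
        rw [div_le_iff₀ h4s]; nlinarith
      have hxs : x ≤ s/9 := by linarith
      have hx2 : x^2 ≤ s/810 := by nlinarith
      linarith
    rw [← hI] at hKle
    have : s/6 * c₁ * q ≤ c₁ * (s/9) := by
      calc s/6 * c₁ * q ≤ (A c₁ c₂)^2 * q := mul_le_mul_of_nonneg_right hKle hq0.le
        _ ≤ c₁^2 := hIq
        _ ≤ c₁ * (s/9) := by nlinarith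
    have hcs : 0 < c₁ * s := mul_pos h1 hs0
    have h8 : (c₁*s)*2 ≤ (c₁*s)*q := mul_le_mul_of_nonneg_left hq.le hcs.le
    have this' : (c₁*s)*q/6 ≤ (c₁*s)/9 := by linear_combination this
    nlinarith
  -- Step 3: lower bound on A
  refine ⟨hc1s, ?_⟩
  obtain ⟨u, hu_def⟩ : ∃ u : ℝ, u = s/9 := ⟨_, rfl⟩
  have huc : u ≤ c₁ := by rw [hu_def]; exact hc1s
  have hu0 : 0 < u := by rw [hu_def]; positivity
  have hu1 : u ≤ 1/90 := by rw [hu_def]; linarith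
  have hsplit : (∫ x in (0:ℝ)..u, (f x - f (x + c₂))) + (∫ x in u..c₁, (f x - f (x + c₂)))
      = ∫ x in (0:ℝ)..c₁, (f x - f (x + c₂)) := by
    apply intervalIntegral.integral_add_adjacent_intervals
    · exact (f_intble le_rfl hu0.le).sub (f_shift_intble h2 hu0.le)
    · have hsh : IntervalIntegrable (fun x => f (x + c₂)) volume u c₁ := by
        have h := (f_intble (by linarith : (0:ℝ) ≤ u + c₂)
          (by linarith : (0:ℝ) ≤ c₁ + c₂)).comp_add_right c₂
        simpa using h
      exact (f_intble hu0.le h1.le).sub hsh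
  have htail : 0 ≤ ∫ x in u..c₁, (f x - f (x + c₂)) := by
    apply intervalIntegral.integral_nonneg huc
    intro x hx
    have hx0 : 0 < x := lt_of_lt_of_le hu0 hx.1
    exact sub_nonneg.2 (f_anti hx0 (by linarith))
  have hhead : u/3 * u ≤ ∫ x in (0:ℝ)..u, (f x - f (x + c₂)) := by
    apply integral_const_le hu0.le
      ((f_intble le_rfl hu0.le).sub (f_shift_intble h2 hu0.le))
    intro x hx hxu
    have hx1 : x ≤ 1 := by linarith
    have hL := f_lower hx hx1
    have hanti : f (x + c₂) ≤ f (x + u) := f_anti (by linarith) (by linarith)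
    have hU := f_upper_local (by linarith : (0:ℝ) < x + u) (by linarith)
    nlinarith [sq_nonneg x, sq_nonneg u, sq_nonneg (x - u)]
  have hIlb : (u/2)^2 ≤ (A c₁ c₂)^2 := by
    rw [hI, ← hsplit]
    nlinarith [sq_nonneg u, hhead, htail]
  calc s/18 = u/2 := by rw [hu_def]; ring
    _ = Real.sqrt ((u/2)^2) := (Real.sqrt_sq (by positivity)).symm
    _ ≤ Real.sqrt ((A c₁ c₂)^2) := Real.sqrt_le_sqrt hIlb
    _ = A c₁ c₂ := Real.sqrt_sq hAnn

lemma A_symm (c₁ c₂ : ℝ) (h1 : 0 < c₁) (h2 : 0 < c₂) : A c₁ c₂ = A c₂ c₁ := by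
  have i1 : IntervalIntegrable f volume 0 c₁ := f_intble le_rfl h1.le
  have i2 : IntervalIntegrable f volume 0 c₂ := f_intble le_rfl h2.le
  have i3 : IntervalIntegrable f volume c₁ (c₁ + c₂) := f_intble h1.le (by linarith)
  have i4 : IntervalIntegrable f volume c₂ (c₁ + c₂) := f_intble h2.le (by linarith)
  have e1 : (∫ x in (0:ℝ)..c₁, f x) + (∫ x in c₁..(c₁+c₂), f x) = ∫ x in (0:ℝ)..(c₁+c₂), f x :=
    intervalIntegral.integral_add_adjacent_intervals i1 i3
  have e2 : (∫ x in (0:ℝ)..c₂, f x) + (∫ x in c₂..(c₁+c₂), f x) = ∫ x in (0:ℝ)..(c₁+c₂), f x :=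
    intervalIntegral.integral_add_adjacent_intervals i2 i4
  rw [A, A]
  congr 1
  have hcomm : c₂ + c₁ = c₁ + c₂ := add_comm _ _
  rw [hcomm]
  show (∫ x in (0:ℝ)..c₁, f x) - (∫ x in c₂..(c₁+c₂), f x)
      = (∫ x in (0:ℝ)..c₂, f x) - (∫ x in c₁..(c₁+c₂), f x)
  linarith

end LBAux

theorem lower_bounds_of_c_and_A (δ : ℝ) (hδ : 0 < δ) :
    ∃ cbar : ℝ, 0 < cbar ∧ ∃ Abar : ℝ, 0 < Abar ∧
      ∀ α β c₁ c₂ : ℝ, Real.sqrt 2 + δ ≤ min α β → 0 < c₁ → 0 < c₂ →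
        c₁ = α * A c₁ c₂ → c₂ = β * A c₁ c₂ →
        cbar ≤ min c₁ c₂ ∧ Abar ≤ A c₁ c₂ := by
  have hs0 := LBAux.sdel_pos hδ
  have hs10 : LBAux.sdel δ ≤ 1/10 := LBAux.sdel_le
  have hqgt := LBAux.q_gt_two hδ
  have hq0 : (0:ℝ) < (Real.sqrt 2 + δ)^2 := by linarith
  have hse : LBAux.sdel δ * 5 ≤ 1/2 - 1/(Real.sqrt 2 + δ)^2 := by
    have := LBAux.sdel_le' (δ := δ); linarith
  have hsd : 0 < Real.sqrt 2 + δ := by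
    have := Real.sqrt_nonneg 2; linarith
  refine ⟨LBAux.sdel δ / 9, by positivity, LBAux.sdel δ / 18, by positivity, ?_⟩
  intro α β c₁ c₂ hαβ h1 h2 e1 e2
  have hα : Real.sqrt 2 + δ ≤ α := le_trans hαβ (min_le_left _ _)
  have hβ : Real.sqrt 2 + δ ≤ β := le_trans hαβ (min_le_right _ _)
  have hAnn : 0 ≤ A c₁ c₂ := Real.sqrt_nonneg _
  rcases le_total c₁ c₂ with h | h
  · have hAc : A c₁ c₂ * (Real.sqrt 2 + δ) ≤ c₁ := by
      calc A c₁ c₂ * (Real.sqrt 2 + δ) ≤ A c₁ c₂ * α := by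
            apply mul_le_mul_of_nonneg_left hα hAnn
        _ = c₁ := by rw [mul_comm]; exact e1.symm
    have hIq : (A c₁ c₂)^2 * (Real.sqrt 2 + δ)^2 ≤ c₁^2 := by
      have hmm := mul_le_mul hAc hAc (mul_nonneg hAnn hsd.le) h1.le
      calc (A c₁ c₂)^2 * (Real.sqrt 2 + δ)^2
          = (A c₁ c₂ * (Real.sqrt 2 + δ)) * (A c₁ c₂ * (Real.sqrt 2 + δ)) := by ring
        _ ≤ c₁ * c₁ := hmm
        _ = c₁^2 := by ring
    obtain ⟨H1, H2⟩ := LBAux.core (LBAux.sdel δ) ((Real.sqrt 2 + δ)^2) c₁ c₂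
      hs0 hs10 hqgt hse h1 h2 h hIq
    exact ⟨by rw [min_eq_left h]; exact H1, H2⟩
  · have hsymm : A c₁ c₂ = A c₂ c₁ := LBAux.A_symm c₁ c₂ h1 h2
    have hAc : A c₂ c₁ * (Real.sqrt 2 + δ) ≤ c₂ := by
      calc A c₂ c₁ * (Real.sqrt 2 + δ) ≤ A c₂ c₁ * β := by
            apply mul_le_mul_of_nonneg_left hβ (hsymm ▸ hAnn)
        _ = c₂ := by rw [mul_comm, ← hsymm]; exact e2.symm
    have hIq : (A c₂ c₁)^2 * (Real.sqrt 2 + δ)^2 ≤ c₂^2 := by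
      have hmm := mul_le_mul hAc hAc (mul_nonneg (hsymm ▸ hAnn) hsd.le) h2.le
      calc (A c₂ c₁)^2 * (Real.sqrt 2 + δ)^2
          = (A c₂ c₁ * (Real.sqrt 2 + δ)) * (A c₂ c₁ * (Real.sqrt 2 + δ)) := by ring
        _ ≤ c₂ * c₂ := hmm
        _ = c₂^2 := by ring
    obtain ⟨H1, H2⟩ := LBAux.core (LBAux.sdel δ) ((Real.sqrt 2 + δ)^2) c₂ c₁
      hs0 hs10 hqgt hse h2 h1 h hIq
    exact ⟨by rw [min_eq_right h]; exact H1, by rw [hsymm]; exact H2⟩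
end

section
/- There exists a universal constant δ > 0 (indeed δ = π²/6000 works) such that the following holds. For all real c₁, c₂ with min(c₁,c₂) ≥ 13/5, define for c > 0 the function η_c(x) = ∑_{k=1}^∞ (e^{−ck}/k²)·(cos(ckx) − x·sin(ckx)) and H(x) = (1/(1+x²))·(π²/6 + η_{c₁+c₂}(x) − η_{c₁}(x) − η_{c₂}(x)). Then for every x > 0, H(x) ≤ H(0) − δ·x²/(1+x²). -/
open scoped Real

/-- `η_c(x) = ∑_{k=1}^∞ (e^{−ck}/k²)·(cos(ckx) − x·sin(ckx))`. -/
noncomputable def eta (c x : ℝ) : ℝ :=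
  ∑' k : ℕ, (Real.exp (-c * ((k : ℝ) + 1)) / ((k : ℝ) + 1) ^ 2) *
    (Real.cos (c * ((k : ℝ) + 1) * x) - x * Real.sin (c * ((k : ℝ) + 1) * x))

/-- `H(x) = (1/(1+x²))·(π²/6 + η_{c₁+c₂}(x) − η_{c₁}(x) − η_{c₂}(x))`. -/
noncomputable def Hfun (c₁ c₂ x : ℝ) : ℝ :=
  (1 / (1 + x ^ 2)) * (π ^ 2 / 6 + eta (c₁ + c₂) x - eta c₁ x - eta c₂ x)

open Real
-- abbreviation for the k-th term of eta
noncomputable def etaTerm (c x : ℝ) (k : ℕ) : ℝ :=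
  (Real.exp (-c * ((k : ℝ) + 1)) / ((k : ℝ) + 1) ^ 2) *
    (Real.cos (c * ((k : ℝ) + 1) * x) - x * Real.sin (c * ((k : ℝ) + 1) * x))

lemma exp_neg_mul_eq (c : ℝ) (k : ℕ) :
    Real.exp (-c * ((k : ℝ) + 1)) = Real.exp (-c) ^ (k + 1) := by
  rw [← Real.exp_nat_mul]
  push_cast
  ring_nf

lemma summable_geom (c : ℝ) (hc : 0 < c) :
    Summable (fun k : ℕ => Real.exp (-c * ((k : ℝ) + 1))) := by
  have h1 : Real.exp (-c) < 1 := Real.exp_lt_one_iff.mpr (by linarith)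
  have h0 : 0 ≤ Real.exp (-c) := (Real.exp_pos _).le
  have := (summable_geometric_of_lt_one h0 h1).mul_left (Real.exp (-c))
  refine this.congr fun k => ?_
  rw [exp_neg_mul_eq, pow_succ, mul_comm]

lemma tsum_geom (c : ℝ) (hc : 0 < c) :
    ∑' k : ℕ, Real.exp (-c * ((k : ℝ) + 1))
      = Real.exp (-c) / (1 - Real.exp (-c)) := by
  have h1 : Real.exp (-c) < 1 := Real.exp_lt_one_iff.mpr (by linarith)
  have h0 : 0 ≤ Real.exp (-c) := (Real.exp_pos _).le
  calc ∑' k : ℕ, Real.exp (-c * ((k : ℝ) + 1))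
      = ∑' k : ℕ, Real.exp (-c) * Real.exp (-c) ^ k := by
        refine tsum_congr fun k => ?_
        rw [exp_neg_mul_eq, pow_succ, mul_comm]
    _ = Real.exp (-c) * (1 - Real.exp (-c))⁻¹ := by
        rw [tsum_mul_left, tsum_geometric_of_lt_one h0 h1]
    _ = _ := by rw [div_eq_mul_inv]

lemma summable_etaTerm (c x : ℝ) (hc : 0 < c) : Summable (etaTerm c x) := by
  have hg := (summable_geom c hc).mul_left (1 + |x|)
  refine Summable.of_norm (hg.of_nonneg_of_le (fun k => norm_nonneg _) fun k => ?_)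
  have hn : (1:ℝ) ≤ ((k:ℝ)+1) := by
    have := Nat.cast_nonneg (α := ℝ) k; linarith
  have hn2 : (1:ℝ) ≤ ((k:ℝ)+1)^2 := one_le_pow₀ hn
  have he : 0 < Real.exp (-c * ((k : ℝ) + 1)) := Real.exp_pos _
  rw [Real.norm_eq_abs, etaTerm, abs_mul]
  have h1 : |Real.exp (-c * ((k : ℝ) + 1)) / ((k : ℝ) + 1) ^ 2|
      ≤ Real.exp (-c * ((k : ℝ) + 1)) := by
    rw [abs_of_pos (by positivity)]
    exact div_le_self he.le hn2
  have h2 : |Real.cos (c * ((k : ℝ) + 1) * x) - x * Real.sin (c * ((k : ℝ) + 1) * x)|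
      ≤ 1 + |x| := by
    refine (abs_sub _ _).trans ?_
    have h3 : |x * Real.sin (c * ((k : ℝ) + 1) * x)| ≤ |x| := by
      rw [abs_mul]
      exact mul_le_of_le_one_right (abs_nonneg x) (Real.abs_sin_le_one _)
    have h4 := Real.abs_cos_le_one (c * ((k : ℝ) + 1) * x)
    linarith
  calc |Real.exp (-c * ((k : ℝ) + 1)) / ((k : ℝ) + 1) ^ 2| *
        |Real.cos (c * ((k : ℝ) + 1) * x) - x * Real.sin (c * ((k : ℝ) + 1) * x)|
      ≤ Real.exp (-c * ((k : ℝ) + 1)) * (1 + |x|) := by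
        apply mul_le_mul h1 h2 (abs_nonneg _) he.le
    _ = (1 + |x|) * Real.exp (-c * ((k : ℝ) + 1)) := mul_comm _ _

lemma etaTerm_zero (c : ℝ) (k : ℕ) :
    etaTerm c 0 k = Real.exp (-c * ((k : ℝ) + 1)) / ((k : ℝ) + 1) ^ 2 := by
  simp [etaTerm]

lemma eta_eq (c x : ℝ) : eta c x = ∑' k, etaTerm c x k := rfl

lemma eta_sub_le (c x : ℝ) (hc : 0 < c) (hx : 0 ≤ x) :
    eta c x - eta c 0 ≤ c * x ^ 2 * (Real.exp (-c) / (1 - Real.exp (-c))) := by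
  have hsx := summable_etaTerm c x hc
  have hs0 := summable_etaTerm c 0 hc
  have hg := (summable_geom c hc).mul_left (c * x ^ 2)
  have termbound : ∀ k : ℕ, etaTerm c x k - etaTerm c 0 k
      ≤ c * x ^ 2 * Real.exp (-c * ((k : ℝ) + 1)) := by
    intro k
    set n : ℝ := (k : ℝ) + 1 with hn_def
    have hn : (1:ℝ) ≤ n := by simp [hn_def]
    have hn0 : (0:ℝ) < n := by linarith
    set E : ℝ := Real.exp (-c * n) with hE_def
    have hE : 0 < E := Real.exp_pos _
    set y : ℝ := c * n * x with hy_def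
    have hy : 0 ≤ y := by positivity
    have hsin : -Real.sin y ≤ y := by
      have h1 : |Real.sin y| ≤ |y| := Real.abs_sin_le_abs
      have h2 : -Real.sin y ≤ |Real.sin y| := neg_le_abs _
      rw [abs_of_nonneg hy] at h1; linarith
    have hcos : Real.cos y ≤ 1 := Real.cos_le_one y
    have hkey : Real.cos y - x * Real.sin y - 1 ≤ x * y := by
      have h3 : x * (-Real.sin y) ≤ x * y := mul_le_mul_of_nonneg_left hsin hx
      nlinarith
    have hrw : etaTerm c x k - etaTerm c 0 k
        = E / n ^ 2 * (Real.cos y - x * Real.sin y - 1) := by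
      rw [etaTerm_zero, etaTerm]; ring
    rw [hrw]
    have step1 : E / n ^ 2 * (Real.cos y - x * Real.sin y - 1) ≤ E / n ^ 2 * (x * y) :=
      mul_le_mul_of_nonneg_left hkey (by positivity)
    have step2 : E / n ^ 2 * (x * y) = c * x ^ 2 * E / n := by
      rw [hy_def]; field_simp
    have step3 : c * x ^ 2 * E / n ≤ c * x ^ 2 * E := div_le_self (by positivity) hn
    linarith
  calc eta c x - eta c 0 = ∑' k, (etaTerm c x k - etaTerm c 0 k) :=
        (Summable.tsum_sub hsx hs0).symm
    _ ≤ ∑' k : ℕ, c * x ^ 2 * Real.exp (-c * ((k : ℝ) + 1)) :=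
        Summable.tsum_le_tsum termbound (hsx.sub hs0) hg
    _ = c * x ^ 2 * (Real.exp (-c) / (1 - Real.exp (-c))) := by
        rw [tsum_mul_left, tsum_geom c hc]

lemma eta_zero_sub_le (c x : ℝ) (hc : 0 < c) (hx : 0 ≤ x) :
    eta c 0 - eta c x ≤ (c ^ 2 / 2 + c) * x ^ 2 * (Real.exp (-c) / (1 - Real.exp (-c))) := by
  have hsx := summable_etaTerm c x hc
  have hs0 := summable_etaTerm c 0 hc
  have hg := (summable_geom c hc).mul_left ((c ^ 2 / 2 + c) * x ^ 2)
  have termbound : ∀ k : ℕ, etaTerm c 0 k - etaTerm c x k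
      ≤ (c ^ 2 / 2 + c) * x ^ 2 * Real.exp (-c * ((k : ℝ) + 1)) := by
    intro k
    set n : ℝ := (k : ℝ) + 1 with hn_def
    have hn : (1:ℝ) ≤ n := by simp [hn_def]
    have hn0 : (0:ℝ) < n := by linarith
    set E : ℝ := Real.exp (-c * n) with hE_def
    have hE : 0 < E := Real.exp_pos _
    set y : ℝ := c * n * x with hy_def
    have hy : 0 ≤ y := by positivity
    have hsin : Real.sin y ≤ y := Real.sin_le hy
    have hcos : 1 - y ^ 2 / 2 ≤ Real.cos y := Real.one_sub_sq_div_two_le_cos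
    have hkey : 1 - Real.cos y + x * Real.sin y ≤ y ^ 2 / 2 + x * y := by
      have h3 : x * Real.sin y ≤ x * y := mul_le_mul_of_nonneg_left hsin hx
      linarith
    have hrw : etaTerm c 0 k - etaTerm c x k
        = E / n ^ 2 * (1 - Real.cos y + x * Real.sin y) := by
      rw [etaTerm_zero, etaTerm]; ring
    rw [hrw]
    have step1 : E / n ^ 2 * (1 - Real.cos y + x * Real.sin y)
        ≤ E / n ^ 2 * (y ^ 2 / 2 + x * y) :=
      mul_le_mul_of_nonneg_left hkey (by positivity)
    have step2 : E / n ^ 2 * (y ^ 2 / 2 + x * y)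
        = c ^ 2 / 2 * x ^ 2 * E + c * x ^ 2 * E / n := by
      rw [hy_def]; field_simp
    have step3 : c * x ^ 2 * E / n ≤ c * x ^ 2 * E := div_le_self (by positivity) hn
    have : E / n ^ 2 * (y ^ 2 / 2 + x * y) ≤ (c ^ 2 / 2 + c) * x ^ 2 * E := by
      rw [step2]; nlinarith
    linarith
  calc eta c 0 - eta c x = ∑' k, (etaTerm c 0 k - etaTerm c x k) :=
        (Summable.tsum_sub hs0 hsx).symm
    _ ≤ ∑' k : ℕ, (c ^ 2 / 2 + c) * x ^ 2 * Real.exp (-c * ((k : ℝ) + 1)) :=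
        Summable.tsum_le_tsum termbound (hs0.sub hsx) hg
    _ = (c ^ 2 / 2 + c) * x ^ 2 * (Real.exp (-c) / (1 - Real.exp (-c))) := by
        rw [tsum_mul_left, tsum_geom c hc]

lemma eta_zero_nonneg (c : ℝ) (hc : 0 < c) : 0 ≤ eta c 0 := by
  rw [eta_eq]
  refine tsum_nonneg fun k => ?_
  rw [etaTerm_zero]; positivity

lemma eta_zero_le (c : ℝ) (hc : 0 < c) :
    eta c 0 ≤ Real.exp (-c) / (1 - Real.exp (-c)) := by
  rw [eta_eq, ← tsum_geom c hc]
  refine Summable.tsum_le_tsum (fun k => ?_) (summable_etaTerm c 0 hc) (summable_geom c hc)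
  rw [etaTerm_zero]
  have hn : (1:ℝ) ≤ ((k:ℝ) + 1) := by have := Nat.cast_nonneg (α := ℝ) k; linarith
  exact div_le_self (Real.exp_pos _).le (one_le_pow₀ hn)

lemma exp_ge_poly (c : ℝ) (hc : 0 ≤ c) :
    1 + c + c ^ 2 / 2 + c ^ 3 / 6 + c ^ 4 / 24 + c ^ 5 / 120 + c ^ 6 / 720 ≤ Real.exp c := by
  have h := Real.sum_le_exp_of_nonneg hc 7
  norm_num [Finset.sum_range_succ, Nat.factorial] at h
  linarith

lemma A_bound (c : ℝ) (hc : 13 / 5 ≤ c) :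
    (c ^ 2 / 2 + c) * (Real.exp (-c) / (1 - Real.exp (-c))) ≤ 13 / 20 := by
  have hc0 : (0:ℝ) < c := by linarith
  have h1 : Real.exp (-c) < 1 := Real.exp_lt_one_iff.mpr (by linarith)
  have h2 : (0:ℝ) < Real.exp (-c) := Real.exp_pos _
  have hq : Real.exp c * Real.exp (-c) = 1 := by rw [← Real.exp_add]; simp
  have hpoly := exp_ge_poly c hc0.le
  have hE1 : c ^ 2 / 2 + c ≤ 13 / 20 * (Real.exp c - 1) := by
    have ht : 0 ≤ c - 13 / 5 := by linarith
    nlinarith [mul_nonneg ht (sq_nonneg c), mul_nonneg (mul_nonneg ht ht) (sq_nonneg c),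
      mul_nonneg ht ht, pow_pos hc0 5, pow_pos hc0 6]
  have key : (c ^ 2 / 2 + c) * Real.exp (-c) ≤ 13 / 20 * (1 - Real.exp (-c)) := by
    have := mul_le_mul_of_nonneg_right hE1 h2.le
    nlinarith [hq]
  calc (c ^ 2 / 2 + c) * (Real.exp (-c) / (1 - Real.exp (-c)))
      = ((c ^ 2 / 2 + c) * Real.exp (-c)) / (1 - Real.exp (-c)) := by ring
    _ ≤ 13 / 20 := by rw [div_le_iff₀ (by linarith)]; linarith

lemma B_bound (s : ℝ) (hs : 26 / 5 ≤ s) :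
    s * (Real.exp (-s) / (1 - Real.exp (-s))) ≤ 3 / 50 := by
  have hs0 : (0:ℝ) < s := by linarith
  have h1 : Real.exp (-s) < 1 := Real.exp_lt_one_iff.mpr (by linarith)
  have h2 : (0:ℝ) < Real.exp (-s) := Real.exp_pos _
  have hq : Real.exp s * Real.exp (-s) = 1 := by rw [← Real.exp_add]; simp
  have hpoly := exp_ge_poly s hs0.le
  have hE1 : s ≤ 3 / 50 * (Real.exp s - 1) := by
    have ht : 0 ≤ s - 26 / 5 := by linarith
    nlinarith [mul_nonneg ht (sq_nonneg s), mul_nonneg (mul_nonneg ht ht) (sq_nonneg s),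
      mul_nonneg ht ht, pow_pos hs0 5, pow_pos hs0 6]
  have key : s * Real.exp (-s) ≤ 3 / 50 * (1 - Real.exp (-s)) := by
    have := mul_le_mul_of_nonneg_right hE1 h2.le
    nlinarith [hq]
  calc s * (Real.exp (-s) / (1 - Real.exp (-s)))
      = (s * Real.exp (-s)) / (1 - Real.exp (-s)) := by ring
    _ ≤ 3 / 50 := by rw [div_le_iff₀ (by linarith)]; linarith

lemma Q_bound (c : ℝ) (hc : 13 / 5 ≤ c) :
    Real.exp (-c) / (1 - Real.exp (-c)) ≤ 1 / 12 := by
  have hc0 : (0:ℝ) < c := by linarith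
  have h1 : Real.exp (-c) < 1 := Real.exp_lt_one_iff.mpr (by linarith)
  have h2 : (0:ℝ) < Real.exp (-c) := Real.exp_pos _
  have hq : Real.exp c * Real.exp (-c) = 1 := by rw [← Real.exp_add]; simp
  have hE : (13:ℝ) ≤ Real.exp c := by
    have hpoly := exp_ge_poly (13/5) (by norm_num)
    have hmono : Real.exp (13/5) ≤ Real.exp c := Real.exp_le_exp.mpr hc
    nlinarith
  have hq13 : Real.exp (-c) ≤ 1 / 13 := by
    rw [Real.exp_neg]
    rw [inv_le_comm₀ (by positivity) (by norm_num)]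
    simpa using hE
  rw [div_le_iff₀ (by linarith)]
  linarith

theorem technical_lemma :
    ∃ δ : ℝ, 0 < δ ∧ ∀ c₁ c₂ : ℝ, 13 / 5 ≤ min c₁ c₂ →
      ∀ x : ℝ, 0 < x → Hfun c₁ c₂ x ≤ Hfun c₁ c₂ 0 - δ * x ^ 2 / (1 + x ^ 2) := by
  refine ⟨π ^ 2 / 6000, by positivity, fun c₁ c₂ hmin x hx => ?_⟩
  have hc₁ : 13 / 5 ≤ c₁ := le_trans hmin (min_le_left _ _)
  have hc₂ : 13 / 5 ≤ c₂ := le_trans hmin (min_le_right _ _)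
  have hc₁0 : (0:ℝ) < c₁ := by linarith
  have hc₂0 : (0:ℝ) < c₂ := by linarith
  have ha : 26 / 5 ≤ c₁ + c₂ := by linarith
  have ha0 : (0:ℝ) < c₁ + c₂ := by linarith
  have hx0 : (0:ℝ) ≤ x := hx.le
  have hx2 : (0:ℝ) ≤ x ^ 2 := sq_nonneg x
  -- series bounds
  have h1 : eta (c₁ + c₂) x - eta (c₁ + c₂) 0 ≤ 3 / 50 * x ^ 2 := by
    have := eta_sub_le (c₁ + c₂) x ha0 hx0
    have hb := B_bound (c₁ + c₂) ha
    have hQ : 0 ≤ Real.exp (-(c₁ + c₂)) / (1 - Real.exp (-(c₁ + c₂))) := by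
      have h' : Real.exp (-(c₁ + c₂)) < 1 := Real.exp_lt_one_iff.mpr (by linarith)
      exact div_nonneg (Real.exp_pos _).le (by linarith)
    nlinarith
  have h2 : eta c₁ 0 - eta c₁ x ≤ 13 / 20 * x ^ 2 := by
    have := eta_zero_sub_le c₁ x hc₁0 hx0
    have hb := A_bound c₁ hc₁
    have hQ : 0 ≤ Real.exp (-c₁) / (1 - Real.exp (-c₁)) := by
      have h' : Real.exp (-c₁) < 1 := Real.exp_lt_one_iff.mpr (by linarith)
      exact div_nonneg (Real.exp_pos _).le (by linarith)
    nlinarith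
  have h3 : eta c₂ 0 - eta c₂ x ≤ 13 / 20 * x ^ 2 := by
    have := eta_zero_sub_le c₂ x hc₂0 hx0
    have hb := A_bound c₂ hc₂
    have hQ : 0 ≤ Real.exp (-c₂) / (1 - Real.exp (-c₂)) := by
      have h' : Real.exp (-c₂) < 1 := Real.exp_lt_one_iff.mpr (by linarith)
      exact div_nonneg (Real.exp_pos _).le (by linarith)
    nlinarith
  have h4 : eta c₁ 0 ≤ 1 / 12 := (eta_zero_le c₁ hc₁0).trans (Q_bound c₁ hc₁)
  have h5 : eta c₂ 0 ≤ 1 / 12 := (eta_zero_le c₂ hc₂0).trans (Q_bound c₂ hc₂)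
  have h6 : 0 ≤ eta (c₁ + c₂) 0 := eta_zero_nonneg (c₁ + c₂) ha0
  have hπ2 : (9.8596:ℝ) ≤ π ^ 2 := by nlinarith [Real.pi_gt_d2]
  have hD : 0 ≤ (π ^ 2 / 6 + eta (c₁ + c₂) 0 - eta c₁ 0 - eta c₂ 0 - π ^ 2 / 6000 - 34 / 25)
      * x ^ 2 := by
    apply mul_nonneg _ hx2
    nlinarith
  have key : π ^ 2 / 6 + eta (c₁ + c₂) x - eta c₁ x - eta c₂ x
      ≤ (π ^ 2 / 6 + eta (c₁ + c₂) 0 - eta c₁ 0 - eta c₂ 0) * (1 + x ^ 2)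
        - π ^ 2 / 6000 * x ^ 2 := by nlinarith [h1, h2, h3, hD]
  have hP : (0:ℝ) < 1 + x ^ 2 := by positivity
  have h0 : Hfun c₁ c₂ 0 = π ^ 2 / 6 + eta (c₁ + c₂) 0 - eta c₁ 0 - eta c₂ 0 := by
    simp [Hfun]
  calc Hfun c₁ c₂ x
      = (π ^ 2 / 6 + eta (c₁ + c₂) x - eta c₁ x - eta c₂ x) / (1 + x ^ 2) := by
        rw [Hfun]; ring
    _ ≤ ((π ^ 2 / 6 + eta (c₁ + c₂) 0 - eta c₁ 0 - eta c₂ 0) * (1 + x ^ 2)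
          - π ^ 2 / 6000 * x ^ 2) / (1 + x ^ 2) := by
        gcongr
    _ = (π ^ 2 / 6 + eta (c₁ + c₂) 0 - eta c₁ 0 - eta c₂ 0)
          - π ^ 2 / 6000 * x ^ 2 / (1 + x ^ 2) := by
        field_simp
    _ = Hfun c₁ c₂ 0 - π ^ 2 / 6000 * x ^ 2 / (1 + x ^ 2) := by rw [h0]
end

section
/- For every real number c > 0, one has Li₂(e^{−c}) < (4e^c − 3) / (4(e^{2c} − e^c)). -/
lemma li2_key (x : ℝ) (hx0 : 0 < x) (hx1 : x < 1) :
    Li2 x < (4 * x - 3 * x ^ 2) / (4 * (1 - x)) := by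
  have hgeo : Summable (fun k : ℕ => x ^ k) := summable_geometric_of_lt_one hx0.le hx1
  have hg1 : Summable (fun k : ℕ => x ^ (k + 1) / 4) := by
    have := (hgeo.mul_left (x / 4))
    refine this.congr fun k => by ring
  have hg : Summable (fun k : ℕ => x ^ (k + 1) / 4 + (if k = 0 then 3 * x / 4 else 0)) := by
    refine hg1.add ?_
    exact summable_of_ne_finset_zero (s := {0}) (fun k hk => by
      simp at hk; simp [hk])
  have hlt : Li2 x < ∑' k : ℕ, (x ^ (k + 1) / 4 + (if k = 0 then 3 * x / 4 else 0)) := by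
    unfold Li2
    have hf : Summable (fun k : ℕ => x ^ (k + 1) / ((k : ℝ) + 1) ^ 2) := by
      have hb : Summable (fun k : ℕ => x ^ (k + 1)) :=
        (hgeo.mul_left x).congr (fun k => (by ring : x * x ^ k = x ^ (k + 1)))
      refine Summable.of_nonneg_of_le (fun k => by positivity) (fun k => ?_) hb
      have h1 : (1:ℝ) ≤ ((k : ℝ) + 1) ^ 2 := by nlinarith [Nat.cast_nonneg (α := ℝ) k]
      calc x ^ (k + 1) / ((k : ℝ) + 1) ^ 2 ≤ x ^ (k + 1) / 1 :=
            div_le_div_of_nonneg_left (by positivity) one_pos h1 |>.trans_eq rfl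
        _ = x ^ (k + 1) := div_one _
    refine Summable.tsum_lt_tsum (i := 2) ?_ ?_ hf hg
    · intro k
      rcases Nat.eq_zero_or_pos k with rfl | hk
      · simp; linarith
      · have h1 : (1:ℝ) / ((k : ℝ) + 1) ^ 2 ≤ 1 / 4 := by
          rw [div_le_div_iff₀ (by positivity) (by norm_num)]
          have : (2:ℝ) ≤ (k:ℝ) + 1 := by
            have : (1:ℝ) ≤ (k:ℝ) := by exact_mod_cast hk
            linarith
          nlinarith
        have hxp : (0:ℝ) ≤ x ^ (k + 1) := by positivity
        have := mul_le_mul_of_nonneg_left h1 hxp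
        have hk0 : k ≠ 0 := Nat.pos_iff_ne_zero.mp hk
        simp [hk0]
        calc x ^ (k + 1) / ((k : ℝ) + 1) ^ 2 = x ^ (k+1) * (1 / ((k : ℝ) + 1) ^ 2) := by ring
          _ ≤ x ^ (k+1) * (1/4) := this
          _ = x ^ (k+1) / 4 := by ring
    · have hxp : (0:ℝ) < x ^ 3 := by positivity
      norm_num
      nlinarith
  have hsum : ∑' k : ℕ, (x ^ (k + 1) / 4 + (if k = 0 then 3 * x / 4 else 0))
      = (4 * x - 3 * x ^ 2) / (4 * (1 - x)) := by
    rw [Summable.tsum_add hg1 (summable_of_ne_finset_zero (s := {0}) (fun k hk => by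
      simp at hk; simp [hk]))]
    have h1 : ∑' k : ℕ, x ^ (k + 1) / 4 = (x / 4) * (1 - x)⁻¹ := by
      calc ∑' k : ℕ, x ^ (k + 1) / 4 = ∑' k : ℕ, (x / 4) * x ^ k :=
            tsum_congr fun k => by ring
        _ = (x / 4) * ∑' k : ℕ, x ^ k := tsum_mul_left
        _ = (x / 4) * (1 - x)⁻¹ := by rw [tsum_geometric_of_lt_one hx0.le hx1]
    have h2 : ∑' k : ℕ, (if k = 0 then 3 * x / 4 else 0) = 3 * x / 4 := tsum_ite_eq 0 _
    rw [h1, h2]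
    have h1x : (1:ℝ) - x ≠ 0 := by linarith
    field_simp
    ring
  linarith [hlt, hsum.le, hsum.ge]

theorem li2_exp_neg_lt (c : ℝ) (hc : 0 < c) :
    Li2 (Real.exp (-c)) <
      (4 * Real.exp c - 3) / (4 * (Real.exp (2 * c) - Real.exp c)) := by
  set x := Real.exp (-c) with hxdef
  have hx0 : 0 < x := Real.exp_pos _
  have hx1 : x < 1 := Real.exp_lt_one_iff.mpr (by linarith)
  have hkey := li2_key x hx0 hx1
  have hxe : x = (Real.exp c)⁻¹ := by rw [hxdef, Real.exp_neg]
  have hy1 : 1 < Real.exp c := by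
    have := Real.exp_lt_exp.mpr hc
    simpa using this
  have h2c : Real.exp (2 * c) = Real.exp c * Real.exp c := by
    rw [two_mul, Real.exp_add]
  have heq : (4 * x - 3 * x ^ 2) / (4 * (1 - x))
      = (4 * Real.exp c - 3) / (4 * (Real.exp (2 * c) - Real.exp c)) := by
    have hy0 : (0:ℝ) < Real.exp c := Real.exp_pos c
    rw [div_eq_div_iff (by linarith) (by rw [h2c]; nlinarith)]
    rw [hxe, h2c]
    field_simp
  linarith [hkey, heq.le, heq.ge]
end

section
/- For all positive integers N, M and every complex number z with Re(z) > 0, one has ∏_{j=M+1}^{N+M} (1 − e^{−jz}) / ∏_{j=1}^{N} (1 − e^{−jz}) = exp( ∑_{k=1}^∞ (1/k) · e^{−kz}(1 − e^{−kNz})(1 − e^{−kMz}) / (1 − e^{−kz}) ), where the series on the right converges absolutely. -/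
lemma gfes_aux_geom (x : ℂ) (hx : x ≠ 1) (N M : ℕ) :
    (∑ j ∈ Finset.Icc 1 N, x ^ j) - (∑ j ∈ Finset.Icc (M + 1) (N + M), x ^ j)
      = x * (1 - x ^ N) * (1 - x ^ M) / (1 - x) := by
  have h1x : (1 : ℂ) - x ≠ 0 := sub_ne_zero.mpr (fun h => hx h.symm)
  rw [← Finset.Ico_add_one_right_eq_Icc 1 N, ← Finset.Ico_add_one_right_eq_Icc (M + 1) (N + M),
    geom_sum_Ico' hx (by omega), geom_sum_Ico' hx (by omega)]
  field_simp
  ring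

lemma gfes_exp_pow (z : ℂ) (n : ℕ) : Complex.exp (-(n : ℂ) * z) = Complex.exp (-z) ^ n := by
  rw [← Complex.exp_nat_mul]; ring_nf

theorem generating_function_exp_series (N M : ℕ) (hN : 0 < N) (hM : 0 < M)
    (z : ℂ) (hz : 0 < z.re) :
    Summable (fun k : ℕ =>
      ‖(1 / ((k : ℂ) + 1)) * (Complex.exp (-((k : ℂ) + 1) * z)
          * (1 - Complex.exp (-((k : ℂ) + 1) * (N : ℂ) * z))
          * (1 - Complex.exp (-((k : ℂ) + 1) * (M : ℂ) * z))
          / (1 - Complex.exp (-((k : ℂ) + 1) * z)))‖) ∧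
    (∏ j ∈ Finset.Icc (M + 1) (N + M), (1 - Complex.exp (-(j : ℂ) * z))) /
        (∏ j ∈ Finset.Icc 1 N, (1 - Complex.exp (-(j : ℂ) * z))) =
      Complex.exp (∑' k : ℕ,
        (1 / ((k : ℂ) + 1)) * (Complex.exp (-((k : ℂ) + 1) * z)
          * (1 - Complex.exp (-((k : ℂ) + 1) * (N : ℂ) * z))
          * (1 - Complex.exp (-((k : ℂ) + 1) * (M : ℂ) * z))
          / (1 - Complex.exp (-((k : ℂ) + 1) * z)))) := by
  set q : ℂ := Complex.exp (-z) with hqdef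
  have hq : ‖q‖ < 1 := by
    rw [hqdef, Complex.norm_exp]
    rw [Real.exp_lt_one_iff]
    simpa using hz
  have hq0 : (0:ℝ) ≤ ‖q‖ := norm_nonneg _
  -- rewrite exponentials into powers of q
  have e1 : ∀ k : ℕ, Complex.exp (-((k : ℂ) + 1) * z) = q ^ (k + 1) := by
    intro k
    rw [hqdef, ← gfes_exp_pow z (k + 1)]
    push_cast; ring_nf
  have e2 : ∀ k : ℕ, Complex.exp (-((k : ℂ) + 1) * (N : ℂ) * z) = (q ^ (k + 1)) ^ N := by
    intro k
    rw [hqdef, ← pow_mul, ← gfes_exp_pow z ((k + 1) * N)]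
    push_cast; ring_nf
  have e3 : ∀ k : ℕ, Complex.exp (-((k : ℂ) + 1) * (M : ℂ) * z) = (q ^ (k + 1)) ^ M := by
    intro k
    rw [hqdef, ← pow_mul, ← gfes_exp_pow z ((k + 1) * M)]
    push_cast; ring_nf
  have e4 : ∀ j : ℕ, Complex.exp (-(j : ℂ) * z) = q ^ j := fun j => gfes_exp_pow z j
  set f : ℕ → ℂ := fun k =>
      (1 / ((k : ℂ) + 1)) * (Complex.exp (-((k : ℂ) + 1) * z)
          * (1 - Complex.exp (-((k : ℂ) + 1) * (N : ℂ) * z))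
          * (1 - Complex.exp (-((k : ℂ) + 1) * (M : ℂ) * z))
          / (1 - Complex.exp (-((k : ℂ) + 1) * z))) with hfdef
  have hfq : ∀ k : ℕ, f k = (1 / ((k : ℂ) + 1)) * (q ^ (k + 1)
      * (1 - (q ^ (k + 1)) ^ N) * (1 - (q ^ (k + 1)) ^ M) / (1 - q ^ (k + 1))) := by
    intro k; rw [hfdef]; simp only [e1 k, e2 k, e3 k]
  have hxk : ∀ k : ℕ, ‖q ^ (k + 1)‖ < 1 := by
    intro k
    rw [norm_pow]
    exact pow_lt_one₀ hq0 hq (Nat.succ_ne_zero k)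
  have hxne : ∀ k : ℕ, q ^ (k + 1) ≠ 1 := by
    intro k h
    have := hxk k
    rw [h] at this
    simp at this
  -- Summability
  have hsum : Summable (fun k : ℕ => ‖f k‖) := by
    have hdpos : (0:ℝ) < 1 - ‖q‖ := by linarith
    have hbound : ∀ k : ℕ, ‖f k‖ ≤ (4 / (1 - ‖q‖)) * ‖q‖ ^ (k + 1) := by
      intro k
      rw [hfq k]
      have hd : (1:ℝ) - ‖q‖ ≤ ‖1 - q ^ (k + 1)‖ := by
        have h1 : ‖q ^ (k + 1)‖ ≤ ‖q‖ := by
          rw [norm_pow]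
          simpa using pow_le_pow_of_le_one hq0 hq.le (by omega : 1 ≤ k + 1)
        have h2 := norm_sub_norm_le (1 : ℂ) (q ^ (k + 1))
        simp only [norm_one] at h2
        linarith
      have h2N : ‖1 - (q ^ (k + 1)) ^ N‖ ≤ 2 := by
        have hpN : ‖(q ^ (k + 1)) ^ N‖ ≤ 1 := by
          rw [norm_pow]
          exact pow_le_one₀ (norm_nonneg _) (hxk k).le
        calc ‖1 - (q ^ (k + 1)) ^ N‖ ≤ ‖(1:ℂ)‖ + ‖(q ^ (k + 1)) ^ N‖ := norm_sub_le _ _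
          _ ≤ 1 + 1 := by simpa using hpN
          _ = 2 := by norm_num
      have h2M : ‖1 - (q ^ (k + 1)) ^ M‖ ≤ 2 := by
        have hpM : ‖(q ^ (k + 1)) ^ M‖ ≤ 1 := by
          rw [norm_pow]
          exact pow_le_one₀ (norm_nonneg _) (hxk k).le
        calc ‖1 - (q ^ (k + 1)) ^ M‖ ≤ ‖(1:ℂ)‖ + ‖(q ^ (k + 1)) ^ M‖ := norm_sub_le _ _
          _ ≤ 1 + 1 := by simpa using hpM
          _ = 2 := by norm_num
      have hone : (1 : ℝ) / ‖(k : ℂ) + 1‖ ≤ 1 := by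
        have hk : ((k : ℂ) + 1) = ((k + 1 : ℕ) : ℂ) := by push_cast; ring
        rw [hk, Complex.norm_natCast]
        rw [div_le_one (by exact_mod_cast Nat.succ_pos k)]
        exact_mod_cast Nat.one_le_iff_ne_zero.mpr (Nat.succ_ne_zero k)
      simp only [norm_mul, norm_div, norm_pow, norm_one]
      calc (1:ℝ) / ‖(k : ℂ) + 1‖ * (‖q‖ ^ (k + 1) * ‖1 - (q ^ (k + 1)) ^ N‖ *
              ‖1 - (q ^ (k + 1)) ^ M‖ / ‖1 - q ^ (k + 1)‖)
          ≤ 1 * (‖q‖ ^ (k + 1) * 2 * 2 / (1 - ‖q‖)) := by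
            gcongr
        _ = (4 / (1 - ‖q‖)) * ‖q‖ ^ (k + 1) := by ring
    apply Summable.of_nonneg_of_le (fun k => norm_nonneg _) hbound
    have hg : Summable (fun k : ℕ => ‖q‖ ^ k) := summable_geometric_of_lt_one hq0 hq
    simpa [pow_succ, mul_comm, mul_left_comm, mul_assoc] using
      (hg.mul_left ((4 / (1 - ‖q‖)) * ‖q‖))
  refine ⟨hsum, ?_⟩
  -- per j: each factor is nonzero and equals exp(log ...)
  have hqj : ∀ j : ℕ, 0 < j → ‖q ^ j‖ < 1 := by
    intro j hj
    rw [norm_pow]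
    exact pow_lt_one₀ hq0 hq hj.ne'
  have hne : ∀ j : ℕ, 0 < j → (1 : ℂ) - q ^ j ≠ 0 := by
    intro j hj h
    have h1 : q ^ j = 1 := by linear_combination -h
    have := hqj j hj
    rw [h1] at this
    simp at this
  -- the log series
  have hlog : ∀ j : ℕ, 0 < j →
      HasSum (fun k : ℕ => (q ^ (k + 1)) ^ j / ((k : ℂ) + 1)) (-Complex.log (1 - q ^ j)) := by
    intro j hj
    have h := Complex.hasSum_taylorSeries_neg_log (hqj j hj)
    have h0 : (fun n : ℕ => (q ^ j) ^ n / (n : ℂ)) 0 = 0 := by simp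
    have h' : HasSum (fun n : ℕ => (q ^ j) ^ (n + 1) / ((n : ℂ) + 1))
        (-Complex.log (1 - q ^ j)) := by
      have := (hasSum_nat_add_iff (f := fun n : ℕ => (q ^ j) ^ n / (n : ℂ)) 1).mpr
        (by simpa using h)
      convert this using 2 with n
      · exact rfl
      · push_cast; ring_nf
    convert h' using 2 with k
    rw [← pow_mul, ← pow_mul, mul_comm]
  -- combine over the two index sets
  have hB : HasSum (fun k : ℕ => ∑ j ∈ Finset.Icc 1 N, (q ^ (k + 1)) ^ j / ((k : ℂ) + 1))
      (∑ j ∈ Finset.Icc 1 N, -Complex.log (1 - q ^ j)) := by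
    apply hasSum_sum
    intro j hj
    exact hlog j (by simp at hj; omega)
  have hA : HasSum (fun k : ℕ =>
      ∑ j ∈ Finset.Icc (M + 1) (N + M), (q ^ (k + 1)) ^ j / ((k : ℂ) + 1))
      (∑ j ∈ Finset.Icc (M + 1) (N + M), -Complex.log (1 - q ^ j)) := by
    apply hasSum_sum
    intro j hj
    exact hlog j (by simp at hj; omega)
  have hBA := hB.sub hA
  have hfeq : (fun k : ℕ => (∑ j ∈ Finset.Icc 1 N, (q ^ (k + 1)) ^ j / ((k : ℂ) + 1)) -
      ∑ j ∈ Finset.Icc (M + 1) (N + M), (q ^ (k + 1)) ^ j / ((k : ℂ) + 1)) = f := by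
    funext k
    rw [hfq k, ← Finset.sum_div, ← Finset.sum_div, div_sub_div_same,
      gfes_aux_geom (q ^ (k + 1)) (hxne k) N M]
    field_simp
  rw [hfeq] at hBA
  have htsum : ∑' k : ℕ, f k = (∑ j ∈ Finset.Icc 1 N, -Complex.log (1 - q ^ j)) -
      ∑ j ∈ Finset.Icc (M + 1) (N + M), -Complex.log (1 - q ^ j) := hBA.tsum_eq
  -- products as exponentials
  have hprod : ∀ (s : Finset ℕ), (∀ j ∈ s, 0 < j) →
      (∏ j ∈ s, (1 - Complex.exp (-(j : ℂ) * z))) =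
      Complex.exp (∑ j ∈ s, Complex.log (1 - q ^ j)) := by
    intro s hs
    rw [Complex.exp_sum]
    apply Finset.prod_congr rfl
    intro j hj
    rw [e4 j, Complex.exp_log (hne j (hs j hj))]
  rw [hprod _ (fun j hj => by simp at hj; omega),
    hprod _ (fun j hj => by simp at hj; omega), ← Complex.exp_sub]
  show _ = Complex.exp (∑' k : ℕ, f k)
  rw [htsum]
  congr 1
  simp [Finset.sum_neg_distrib]
  ring
end

section
/- For all real c₁, c₂ > 0, one has A(c₁,c₂)² = Li₂(1 − e^{−c₁}) + Li₂(1 − e^{−c₂}) − Li₂(1 − e^{−(c₁+c₂)}), and moreover A(c₁,c₂)² = π²/6 + Li₂(e^{−(c₁+c₂)}) − Li₂(e^{−c₁}) − Li₂(e^{−c₂}) − (c₁+c₂)·log(1 − e^{−(c₁+c₂)}) + c₁·log(1 − e^{−c₁}) + c₂·log(1 − e^{−c₂}). -/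
open scoped Real
open Set MeasureTheory Filter Topology

lemma hasSum_inv_sq_succ : HasSum (fun k : ℕ => 1 / ((k:ℝ)+1)^2) (π^2/6) := by
  have h := (hasSum_nat_add_iff (f := fun n : ℕ => (1:ℝ)/(n:ℝ)^2) 1).mpr (by simpa using hasSum_zeta_two)
  convert h using 2 with k
  · rfl
  push_cast; ring

lemma summable_inv_sq_succ : Summable (fun k : ℕ => 1 / ((k:ℝ)+1)^2) := hasSum_inv_sq_succ.summable

lemma Li2_term_bound {x : ℝ} (hx : |x| ≤ 1) (k : ℕ) :
    ‖x ^ (k+1) / ((k:ℝ)+1)^2‖ ≤ 1 / ((k:ℝ)+1)^2 := by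
  have hk : (0:ℝ) < ((k:ℝ)+1)^2 := by positivity
  rw [norm_div, norm_pow, Real.norm_eq_abs, Real.norm_eq_abs, abs_of_pos hk]
  gcongr
  calc |x| ^ (k+1) ≤ 1 ^ (k+1) := pow_le_pow_left₀ (abs_nonneg x) hx _
    _ = 1 := one_pow _

lemma Li2_summable {x : ℝ} (hx : |x| ≤ 1) :
    Summable (fun k : ℕ => x ^ (k+1) / ((k:ℝ)+1)^2) :=
  Summable.of_norm_bounded summable_inv_sq_succ (Li2_term_bound hx)

lemma Li2_continuousOn : ContinuousOn Li2 (Icc (-1:ℝ) 1) := by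
  apply continuousOn_tsum (u := fun k : ℕ => 1 / ((k:ℝ)+1)^2)
    (fun k => (continuous_pow _).continuousOn.div_const _) summable_inv_sq_succ
  intro k x hx
  exact Li2_term_bound (abs_le.mpr ⟨hx.1, hx.2⟩) k

lemma Li2_one : Li2 1 = π^2/6 := by
  have : Li2 1 = ∑' k : ℕ, 1 / ((k:ℝ)+1)^2 := by unfold Li2; simp
  rw [this, hasSum_inv_sq_succ.tsum_eq]

lemma Li2_zero : Li2 0 = 0 := by unfold Li2; simp


lemma Li2_hasDerivAt {x : ℝ} (hx : |x| < 1) :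
    HasDerivAt Li2 (∑' k : ℕ, x ^ k / ((k:ℝ)+1)) x := by
  obtain ⟨r, hxr, hr1⟩ := exists_between hx
  have hr0 : 0 < r := (abs_nonneg x).trans_lt hxr
  have hu : Summable (fun k : ℕ => r ^ k / ((k:ℝ)+1)) := by
    refine Summable.of_nonneg_of_le (fun k => by positivity) (fun k => ?_)
      (summable_geometric_of_lt_one hr0.le hr1)
    exact div_le_self (by positivity) (by linarith [Nat.cast_nonneg (α := ℝ) k])
  have hmem : x ∈ Ioo (-r) r := abs_lt.mp hxr
  have hd : ∀ (k : ℕ) (y : ℝ), y ∈ Ioo (-r) r →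
      HasDerivAt (fun y : ℝ => y^(k+1)/((k:ℝ)+1)^2) (y^k/((k:ℝ)+1)) y := by
    intro k y _
    have h := (hasDerivAt_pow (k+1) y).div_const (((k:ℝ)+1)^2)
    convert h using 1
    · rfl
    · rfl
    have hne : ((k:ℝ)+1) ≠ 0 := by positivity
    push_cast
    field_simp
  have hb : ∀ (k : ℕ) (y : ℝ), y ∈ Ioo (-r) r → ‖y^k/((k:ℝ)+1)‖ ≤ r^k/((k:ℝ)+1) := by
    intro k y hy
    rw [Real.norm_eq_abs, abs_div, abs_pow,
      abs_of_pos (by positivity : (0:ℝ) < (k:ℝ)+1)]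
    have hyr : |y| ≤ r := (abs_lt.mpr ⟨hy.1, hy.2⟩).le
    gcongr
  have h0 : Summable (fun k : ℕ => (0:ℝ)^(k+1)/((k:ℝ)+1)^2) := by
    apply summable_of_isBigO_nat summable_inv_sq_succ
    simp [Asymptotics.isBigO_zero]
  exact hasDerivAt_tsum_of_isPreconnected hu isOpen_Ioo (convex_Ioo _ _).isPreconnected
    hd hb (mem_Ioo.mpr ⟨neg_lt_zero.mpr hr0, hr0⟩) h0 hmem

lemma Li2_deriv_eq {x : ℝ} (hx0 : x ≠ 0) (hx : |x| < 1) :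
    ∑' k : ℕ, x ^ k / ((k:ℝ)+1) = -Real.log (1-x) / x := by
  have h := (Real.hasSum_pow_div_log_of_abs_lt_one hx).mul_left x⁻¹
  have h2 : HasSum (fun k : ℕ => x ^ k / ((k:ℝ)+1)) (x⁻¹ * -Real.log (1-x)) := by
    convert h using 2 with k
    · rfl
    rw [pow_succ']
    field_simp
  rw [h2.tsum_eq, div_eq_inv_mul]

lemma Li2_hasDerivAt' {x : ℝ} (hx0 : x ≠ 0) (hx : |x| < 1) :
    HasDerivAt Li2 (-Real.log (1-x) / x) x :=
  Li2_deriv_eq hx0 hx ▸ Li2_hasDerivAt hx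

lemma inner_mem {c : ℝ} (hc : 0 < c) : |1 - Real.exp (-c)| < 1 := by
  have h1 : Real.exp (-c) < 1 := Real.exp_lt_one_iff.mpr (by linarith)
  have h2 : 0 < Real.exp (-c) := Real.exp_pos _
  rw [abs_lt]; constructor <;> linarith

lemma key_hasDerivAt {x : ℝ} (hx : 0 < x) :
    HasDerivAt (fun y => Li2 (1 - Real.exp (-y))) (x / (Real.exp x - 1)) x := by
  have h1 := inner_mem hx
  have hne : 1 - Real.exp (-x) ≠ 0 := by
    have : Real.exp (-x) < 1 := Real.exp_lt_one_iff.mpr (by linarith)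
    intro h; nlinarith
  have hD := Li2_hasDerivAt' hne h1
  have hinner : HasDerivAt (fun y : ℝ => 1 - Real.exp (-y)) (Real.exp (-x)) x := by
    have := ((Real.hasDerivAt_exp (-x)).comp x (hasDerivAt_neg x)).const_sub 1
    simpa using this
  have := hD.comp x hinner
  convert this using 1
  · rfl
  · rfl
  · rfl
  rw [sub_sub_cancel, Real.log_exp]
  have hex : Real.exp x - 1 > 0 := by
    have := Real.exp_lt_one_iff.mpr (neg_neg_iff_pos.mpr hx)
    nlinarith [Real.one_lt_exp_iff.mpr hx]
  have hex2 : Real.exp (-x) * Real.exp x = 1 := by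
    rw [← Real.exp_add]; simp
  field_simp
  nlinarith [hne]

lemma bose_bound {x : ℝ} (hx : 0 < x) : x / (Real.exp x - 1) ≤ 1 := by
  have h : x + 1 ≤ Real.exp x := Real.add_one_le_exp x
  have h2 : 0 < Real.exp x - 1 := by nlinarith
  rw [div_le_one h2]; linarith

lemma bose_nonneg {x : ℝ} (hx : 0 ≤ x) : 0 ≤ x / (Real.exp x - 1) := by
  rcases eq_or_lt_of_le hx with h | h
  · simp [← h]
  · have h2 : 0 < Real.exp x - 1 := by nlinarith [Real.add_one_le_exp x]
    positivity

lemma bose_integrable {a b : ℝ} (ha : 0 ≤ a) (hab : a ≤ b) :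
    IntervalIntegrable (fun x => x / (Real.exp x - 1)) volume a b := by
  rw [intervalIntegrable_iff, uIoc_of_le hab]
  apply Integrable.mono' (g := fun _ => (1:ℝ))
  · exact integrableOn_const measure_Ioc_lt_top.ne
  · exact (measurable_id.div ((Real.measurable_exp).sub measurable_const)).aestronglyMeasurable
  · refine (ae_restrict_mem measurableSet_Ioc).mono fun x hx => ?_
    have hx0 : 0 < x := lt_of_le_of_lt ha hx.1
    rw [Real.norm_eq_abs, abs_of_nonneg (bose_nonneg hx0.le)]
    exact bose_bound hx0

lemma integral_bose {a b : ℝ} (ha : 0 ≤ a) (hab : a ≤ b) :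
    ∫ x in a..b, x / (Real.exp x - 1)
      = Li2 (1 - Real.exp (-b)) - Li2 (1 - Real.exp (-a)) := by
  refine intervalIntegral.integral_eq_sub_of_hasDeriv_right_of_le (f := fun y => Li2 (1 - Real.exp (-y))) hab ?_ ?_
    (bose_integrable ha hab)
  · have hmaps : MapsTo (fun y : ℝ => 1 - Real.exp (-y)) (Icc a b) (Icc (-1) 1) := by
      intro y hy
      have h2 : 0 < Real.exp (-y) := Real.exp_pos _
      have h3 : Real.exp (-y) ≤ 1 := Real.exp_le_one_iff.mpr (by linarith [hy.1])
      constructor <;> simp <;> linarith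
    exact Li2_continuousOn.comp
      (Continuous.continuousOn (by continuity)) hmaps
  · intro x hx
    have hx0 : 0 < x := lt_of_le_of_lt ha hx.1
    exact (key_hasDerivAt hx0).hasDerivWithinAt

lemma bose_antitone {x y : ℝ} (hx : 0 < x) (hxy : x ≤ y) :
    y / (Real.exp y - 1) ≤ x / (Real.exp x - 1) := by
  rcases eq_or_lt_of_le hxy with rfl | hlt
  · exact le_refl _
  have hy : 0 < y := hx.trans hlt
  have hs := convexOn_exp.secant_mono (a := (0:ℝ)) (mem_univ _) (mem_univ _) (mem_univ _)
    hx.ne' hy.ne' hxy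
  simp only [Real.exp_zero, sub_zero] at hs
  have hex : 0 < Real.exp x - 1 := by nlinarith [Real.add_one_le_exp x]
  have hA : 0 < (Real.exp x - 1)/x := by positivity
  have := one_div_le_one_div_of_le hA hs
  rwa [one_div_div, one_div_div] at this

lemma integral_sub_nonneg {c₁ c₂ : ℝ} (hc₁ : 0 < c₁) (hc₂ : 0 < c₂) :
    (∫ x in c₂..(c₁+c₂), x / (Real.exp x - 1)) ≤ ∫ x in (0:ℝ)..c₁, x / (Real.exp x - 1) := by
  have hshift : (∫ x in c₂..(c₁+c₂), x / (Real.exp x - 1))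
      = ∫ x in (0:ℝ)..c₁, (x + c₂) / (Real.exp (x + c₂) - 1) := by
    have := intervalIntegral.integral_comp_add_right (a := (0:ℝ)) (b := c₁) (d := c₂)
      (fun x => x / (Real.exp x - 1))
    rw [zero_add] at this
    rw [this]
  rw [hshift]
  have hfi : IntervalIntegrable (fun x => (x + c₂) / (Real.exp (x + c₂) - 1)) volume 0 c₁ := by
    have h1 := (bose_integrable (a := c₂) (b := c₁ + c₂) hc₂.le (by linarith)).comp_add_right c₂
    simpa using h1
  refine intervalIntegral.integral_mono_ae_restrict hc₁.le hfi
    (bose_integrable le_rfl hc₁.le) ?_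
  have h0 : ∀ᵐ x : ℝ ∂(volume.restrict (Icc (0:ℝ) c₁)), x ≠ 0 := by
    refine ae_iff.mpr ?_
    have : {x : ℝ | ¬ x ≠ 0} = {0} := by ext x; simp
    rw [this]
    exact le_antisymm ((Measure.restrict_apply_le _ _).trans (by simp)) zero_le
  filter_upwards [ae_restrict_mem measurableSet_Icc, h0] with x hx hx0
  have hxpos : 0 < x := lt_of_le_of_ne hx.1 (Ne.symm hx0)
  exact bose_antitone hxpos (le_add_of_nonneg_right hc₂.le)

lemma reflection_deriv {x : ℝ} (hx : x ∈ Ioo (0:ℝ) 1) :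
    HasDerivAt (fun y => Li2 y + Li2 (1-y) + Real.log y * Real.log (1-y)) 0 x := by
  obtain ⟨h0, h1⟩ := hx
  have hx1 : |x| < 1 := abs_lt.mpr ⟨by linarith, h1⟩
  have hx1' : |1-x| < 1 := abs_lt.mpr ⟨by linarith, by linarith⟩
  have h1x : (0:ℝ) < 1 - x := by linarith
  have hA := Li2_hasDerivAt' h0.ne' hx1
  have hB : HasDerivAt (fun y : ℝ => Li2 (1-y))
      ((-Real.log (1-(1-x)) / (1-x)) * (-1)) x :=
    (Li2_hasDerivAt' h1x.ne' hx1').comp x ((hasDerivAt_id x).const_sub 1)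
  have hL2 : HasDerivAt (fun y : ℝ => Real.log (1-y)) ((1-x)⁻¹ * (-1)) x :=
    (Real.hasDerivAt_log h1x.ne').comp x ((hasDerivAt_id x).const_sub 1)
  have hC := (Real.hasDerivAt_log h0.ne').mul hL2
  have hsum := (hA.add hB).add hC
  convert hsum using 1
  · rfl
  · rfl
  · rfl
  rw [sub_sub_cancel]
  field_simp
  ring

lemma li2_reflection {x : ℝ} (hx : x ∈ Ioo (0:ℝ) 1) :
    Li2 x + Li2 (1-x) + Real.log x * Real.log (1-x) = π^2/6 := by
  set φ : ℝ → ℝ := fun y => Li2 y + Li2 (1-y) + Real.log y * Real.log (1-y) with hφ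
  have hconst : ∀ y ∈ Ioo (0:ℝ) 1, ∀ z ∈ Ioo (0:ℝ) 1, y ≤ z → φ y = φ z := by
    intro y hy z hz hyz
    have h := intervalIntegral.integral_eq_sub_of_hasDerivAt (f := φ)
      (f' := fun _ => (0:ℝ)) (fun t ht => by
        refine reflection_deriv ⟨?_, ?_⟩
        · have := ht.1; rw [min_eq_left hyz] at this; exact lt_of_lt_of_le hy.1 this
        · have := ht.2; rw [max_eq_right hyz] at this; exact lt_of_le_of_lt this hz.2)
      intervalIntegrable_const
    simp only [intervalIntegral.integral_const, smul_zero] at h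
    linarith [h]
  have hne : (𝓝[Ioo (0:ℝ) 1] (0:ℝ)).NeBot := by
    apply mem_closure_iff_nhdsWithin_neBot.mp
    rw [closure_Ioo (by norm_num : (0:ℝ) ≠ 1)]
    exact ⟨le_rfl, by norm_num⟩
  have hev : ∀ᶠ y in 𝓝[Ioo (0:ℝ) 1] (0:ℝ), φ y = φ x := by
    filter_upwards [self_mem_nhdsWithin] with y hy
    rcases le_total y x with h | h
    · exact hconst y hy x hx h
    · exact (hconst x hx y hy h).symm
  have t1 : Tendsto (fun y : ℝ => Li2 y) (𝓝[Ioo (0:ℝ) 1] (0:ℝ)) (𝓝 0) := by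
    have := (Li2_hasDerivAt (x := 0) (by norm_num)).continuousAt
    have h := this.continuousWithinAt (s := Ioo (0:ℝ) 1)
    simpa [Li2_zero] using h.tendsto
  have t2 : Tendsto (fun y : ℝ => Li2 (1-y)) (𝓝[Ioo (0:ℝ) 1] (0:ℝ)) (𝓝 (π^2/6)) := by
    have hc : ContinuousWithinAt Li2 (Icc (-1:ℝ) 1) 1 := Li2_continuousOn 1 (by norm_num)
    have hmap : Tendsto (fun y : ℝ => 1 - y) (𝓝[Ioo (0:ℝ) 1] (0:ℝ)) (𝓝[Icc (-1:ℝ) 1] 1) := by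
      rw [tendsto_nhdsWithin_iff]
      constructor
      · have h : Tendsto (fun y : ℝ => 1 - y) (𝓝 0) (𝓝 1) := by
          simpa using (continuous_sub_left (1:ℝ)).tendsto (0:ℝ)
        exact h.mono_left nhdsWithin_le_nhds
      · filter_upwards [self_mem_nhdsWithin] with y hy
        exact ⟨by linarith [hy.2], by linarith [hy.1]⟩
    have := hc.tendsto.comp hmap
    simpa [Li2_one, Function.comp_def] using this
  have t3 : Tendsto (fun y : ℝ => Real.log y * Real.log (1-y))
      (𝓝[Ioo (0:ℝ) 1] (0:ℝ)) (𝓝 0) := by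
    have ha : Tendsto (fun y : ℝ => y * Real.log y) (𝓝[Ioo (0:ℝ) 1] (0:ℝ)) (𝓝 0) := by
      have := Real.continuous_mul_log.tendsto (0:ℝ)
      simpa using this.mono_left nhdsWithin_le_nhds
    have hb : Tendsto (fun y : ℝ => Real.log (1-y) / y) (𝓝[Ioo (0:ℝ) 1] (0:ℝ)) (𝓝 (-1)) := by
      have hd : HasDerivAt (fun y : ℝ => Real.log (1-y)) (((1:ℝ)-0)⁻¹ * (-1)) 0 :=
        (Real.hasDerivAt_log (show (1:ℝ) - 0 ≠ 0 by norm_num)).comp (0:ℝ)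
          ((hasDerivAt_id (0:ℝ)).const_sub 1)
      have hslope := hasDerivAt_iff_tendsto_slope.mp hd
      have hmono : 𝓝[Ioo (0:ℝ) 1] (0:ℝ) ≤ 𝓝[≠] (0:ℝ) := by
        apply nhdsWithin_mono
        intro y hy
        exact hy.1.ne'
      have h2 := hslope.mono_left hmono
      have : Tendsto (fun y : ℝ => Real.log (1-y) / y) (𝓝[Ioo (0:ℝ) 1] (0:ℝ))
          (𝓝 (((1:ℝ)-0)⁻¹ * (-1))) := by
        refine h2.congr' ?_
        filter_upwards [self_mem_nhdsWithin] with y hy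
        rw [slope_def_field]
        simp
      simpa using this
    have hmul := ha.mul hb
    rw [zero_mul] at hmul
    refine hmul.congr' ?_
    filter_upwards [self_mem_nhdsWithin] with y hy
    field_simp [hy.1.ne']
  have hlim : Tendsto φ (𝓝[Ioo (0:ℝ) 1] (0:ℝ)) (𝓝 (π^2/6)) := by
    have := (t1.add t2).add t3
    simpa using this
  have hconst' : Tendsto φ (𝓝[Ioo (0:ℝ) 1] (0:ℝ)) (𝓝 (φ x)) :=
    tendsto_const_nhds.congr' (hev.mono fun y h => h.symm)
  exact tendsto_nhds_unique hconst' hlim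

theorem A_sq_identities (c₁ c₂ : ℝ) (hc₁ : 0 < c₁) (hc₂ : 0 < c₂) :
    A c₁ c₂ ^ 2 = Li2 (1 - Real.exp (-c₁)) + Li2 (1 - Real.exp (-c₂))
        - Li2 (1 - Real.exp (-(c₁ + c₂))) ∧
    A c₁ c₂ ^ 2 = π ^ 2 / 6 + Li2 (Real.exp (-(c₁ + c₂)))
        - Li2 (Real.exp (-c₁)) - Li2 (Real.exp (-c₂))
        - (c₁ + c₂) * Real.log (1 - Real.exp (-(c₁ + c₂)))
        + c₁ * Real.log (1 - Real.exp (-c₁)) + c₂ * Real.log (1 - Real.exp (-c₂)) := by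
  have hI1 : ∫ x in (0:ℝ)..c₁, x / (Real.exp x - 1) = Li2 (1 - Real.exp (-c₁)) := by
    have := integral_bose le_rfl hc₁.le
    simpa [Li2_zero] using this
  have hI2 : ∫ x in c₂..(c₁+c₂), x / (Real.exp x - 1)
      = Li2 (1 - Real.exp (-(c₁+c₂))) - Li2 (1 - Real.exp (-c₂)) :=
    integral_bose hc₂.le (by linarith)
  have hnn : 0 ≤ (∫ x in (0:ℝ)..c₁, x / (Real.exp x - 1)) -
      ∫ x in c₂..(c₁+c₂), x / (Real.exp x - 1) :=
    sub_nonneg.mpr (integral_sub_nonneg hc₁ hc₂)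
  have hA : A c₁ c₂ ^ 2 = Li2 (1 - Real.exp (-c₁)) + Li2 (1 - Real.exp (-c₂))
      - Li2 (1 - Real.exp (-(c₁ + c₂))) := by
    rw [A, Real.sq_sqrt hnn, hI1, hI2]; ring
  refine ⟨hA, ?_⟩
  have R : ∀ c : ℝ, 0 < c → Li2 (1 - Real.exp (-c))
      = π^2/6 - Li2 (Real.exp (-c)) + c * Real.log (1 - Real.exp (-c)) := by
    intro c hc
    have hx : Real.exp (-c) ∈ Ioo (0:ℝ) 1 :=
      ⟨Real.exp_pos _, Real.exp_lt_one_iff.mpr (by linarith)⟩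
    have h := li2_reflection hx
    rw [Real.log_exp, neg_mul] at h
    linarith
  rw [hA, R c₁ hc₁, R c₂ hc₂, R (c₁+c₂) (by linarith)]
  ring
end
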